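/- arXiv:1403.2542 — 6 statements merged into one kernel-verified Lean document; each statement's English description precedes it below -/
import Mathlib

section
/- Let φ : [1,∞) → (0,∞) be Borel measurable. Then φ belongs to the class RO if and only if there exist Borel measurable real-valued functions β and γ, both bounded on [1,∞), such that φ(t) = exp( β(t) + ∫₁ᵗ γ(τ)/τ dτ ) for every t ≥ 1. -/
open MeasureTheory

/-- A Borel measurable function `φ : [1,∞) → (0,∞)` belongs to the class RO
(is RO-varying at `+∞`). -/
def IsRO (φ : ℝ → ℝ) : Prop :=
  Measurable φ ∧ (∀ t ≥ (1 : ℝ), 0 < φ t) ∧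
    ∃ a > (1 : ℝ), ∃ c ≥ (1 : ℝ), ∀ t ≥ (1 : ℝ), ∀ l, 1 ≤ l → l ≤ a →
      c⁻¹ ≤ φ (l * t) / φ t ∧ φ (l * t) / φ t ≤ c

theorem rev (φ : ℝ → ℝ) (hmeas : Measurable φ) (hpos : ∀ t ≥ (1 : ℝ), 0 < φ t)
    (H : ∃ β γ : ℝ → ℝ, Measurable β ∧ Measurable γ ∧
        (∃ Mβ : ℝ, ∀ t ≥ (1 : ℝ), |β t| ≤ Mβ) ∧
        (∃ Mγ : ℝ, ∀ t ≥ (1 : ℝ), |γ t| ≤ Mγ) ∧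
        ∀ t ≥ (1 : ℝ), φ t = Real.exp (β t + ∫ τ in (1 : ℝ)..t, γ τ / τ)) :
    IsRO φ := by
  obtain ⟨β, γ, hβm, hγm, ⟨Mβ, hMβ⟩, ⟨Mγ, hMγ⟩, hrep⟩ := H
  have hMβ0 : 0 ≤ Mβ := (abs_nonneg _).trans (hMβ 1 le_rfl)
  have hMγ0 : 0 ≤ Mγ := (abs_nonneg _).trans (hMγ 1 le_rfl)
  set K := 2 * Mβ + Mγ * Real.log 2 with hK
  have hK0 : 0 ≤ K := by
    have := Real.log_nonneg (by norm_num : (1:ℝ) ≤ 2)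
    positivity
  refine ⟨hmeas, hpos, 2, one_lt_two, Real.exp K, Real.one_le_exp hK0, ?_⟩
  intro t ht l hl1 hl2
  have hlt : (1:ℝ) ≤ l * t := by nlinarith
  set g : ℝ → ℝ := fun τ => γ τ / τ with hg
  -- interval integrability on intervals inside [1, ∞)
  have hint : ∀ u v : ℝ, 1 ≤ u → 1 ≤ v → IntervalIntegrable g volume u v := by
    intro u v hu hv
    refine (intervalIntegrable_const (c := Mγ)).mono_fun'
      ((hγm.div measurable_id).aestronglyMeasurable.restrict) ?_
    filter_upwards [ae_restrict_mem measurableSet_uIoc] with τ hτ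
    have h1τ : (1:ℝ) ≤ τ := le_trans (le_min hu hv) (le_of_lt hτ.1)
    have hτ0 : 0 < τ := by linarith
    have : |γ τ / τ| = |γ τ| / τ := by rw [abs_div, abs_of_pos hτ0]
    rw [Real.norm_eq_abs, this]
    calc |γ τ| / τ ≤ |γ τ| / 1 := by
          apply div_le_div_of_nonneg_left (abs_nonneg _) one_pos h1τ
      _ ≤ Mγ := by simpa using hMγ τ h1τ
  have hsub : (∫ τ in (1:ℝ)..(l*t), g τ) - ∫ τ in (1:ℝ)..t, g τ
      = ∫ τ in t..(l*t), g τ :=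
    intervalIntegral.integral_interval_sub_left (hint 1 (l*t) le_rfl hlt) (hint 1 t le_rfl ht)
  have ht0 : (0:ℝ) < t := by linarith
  have hlt0 : (0:ℝ) < l * t := by linarith
  have hbnd : |∫ τ in t..(l*t), g τ| ≤ Mγ * Real.log 2 := by
    have hii : IntervalIntegrable (fun τ : ℝ => Mγ * (1/τ)) volume t (l*t) := by
      apply IntervalIntegrable.const_mul
      apply intervalIntegral.intervalIntegrable_one_div (f := fun x : ℝ => x)
      · intro x hx
        have : (1:ℝ) ≤ x := le_trans (le_min ht hlt) hx.1
        exact ne_of_gt (by linarith)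
      · exact continuousOn_id
    have h1 : ‖∫ τ in t..(l*t), g τ‖ ≤ |∫ τ in t..(l*t), Mγ * (1/τ)| := by
      apply intervalIntegral.norm_integral_le_abs_of_norm_le _ hii
      filter_upwards [ae_restrict_mem measurableSet_uIoc] with τ hτ
      have h1τ : (1:ℝ) ≤ τ := le_trans (le_min ht hlt) (le_of_lt hτ.1)
      have hτ0 : (0:ℝ) < τ := by linarith
      rw [Real.norm_eq_abs, show |γ τ / τ| = |γ τ| / τ by rw [abs_div, abs_of_pos hτ0],
        mul_one_div]
      gcongr
      exact hMγ τ h1τ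
    have h2 : (∫ τ in t..(l*t), Mγ * (1/τ)) = Mγ * Real.log l := by
      rw [intervalIntegral.integral_const_mul, integral_one_div
        (by
          intro hmem
          have : (1:ℝ) ≤ (0:ℝ) := le_trans (le_min ht hlt) hmem.1
          linarith)]
      congr 1
      rw [mul_div_assoc, div_self (ne_of_gt ht0), mul_one]
    have h3 : Mγ * Real.log l ≤ Mγ * Real.log 2 := by
      apply mul_le_mul_of_nonneg_left _ hMγ0
      exact Real.log_le_log (by linarith) hl2
    have h4 : |Mγ * Real.log l| = Mγ * Real.log l := by
      rw [abs_of_nonneg]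
      exact mul_nonneg hMγ0 (Real.log_nonneg hl1)
    calc |∫ τ in t..(l*t), g τ| ≤ |∫ τ in t..(l*t), Mγ * (1/τ)| := h1
      _ = Mγ * Real.log l := by rw [h2, h4]
      _ ≤ Mγ * Real.log 2 := h3
  have hratio : φ (l*t) / φ t
      = Real.exp ((β (l*t) - β t) + ∫ τ in t..(l*t), g τ) := by
    rw [hrep t ht, hrep (l*t) hlt, ← Real.exp_sub]
    congr 1
    have := hsub
    ring_nf
    linarith [hsub]
  have habs : |(β (l*t) - β t) + ∫ τ in t..(l*t), g τ| ≤ K := by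
    calc |(β (l*t) - β t) + ∫ τ in t..(l*t), g τ|
        ≤ |β (l*t) - β t| + |∫ τ in t..(l*t), g τ| := abs_add_le _ _
      _ ≤ (|β (l*t)| + |β t|) + Mγ * Real.log 2 := by
          gcongr
          exact abs_sub _ _
      _ ≤ (Mβ + Mβ) + Mγ * Real.log 2 := by gcongr <;> [exact hMβ (l*t) hlt; exact hMβ t ht]
      _ = K := by rw [hK]; ring
  rw [hratio]
  constructor
  · rw [← Real.exp_neg]
    exact Real.exp_le_exp.2 (neg_le_of_abs_le habs)
  · exact Real.exp_le_exp.2 (le_of_abs_le habs)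

lemma aux_ii {f : ℝ → ℝ} (hf : Measurable f) {C : ℝ} (hC : ∀ x, |f x| ≤ C) (u v : ℝ) :
    IntervalIntegrable f volume u v := by
  refine (intervalIntegrable_const (c := C)).mono_fun'
    (hf.aestronglyMeasurable.restrict) ?_
  filter_upwards with x
  simpa [Real.norm_eq_abs] using hC x

theorem fwd (φ : ℝ → ℝ) (hmeas : Measurable φ) (hpos : ∀ t ≥ (1 : ℝ), 0 < φ t)
    (H : IsRO φ) :
    ∃ β γ : ℝ → ℝ, Measurable β ∧ Measurable γ ∧
        (∃ Mβ : ℝ, ∀ t ≥ (1 : ℝ), |β t| ≤ Mβ) ∧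
        (∃ Mγ : ℝ, ∀ t ≥ (1 : ℝ), |γ t| ≤ Mγ) ∧
        ∀ t ≥ (1 : ℝ), φ t = Real.exp (β t + ∫ τ in (1 : ℝ)..t, γ τ / τ) := by
  obtain ⟨-, -, a, ha, c, hc1, hc⟩ := H
  have ha0 : (0:ℝ) < a := by linarith
  have hh : 0 < Real.log a := Real.log_pos ha
  set h := Real.log a with hhdef
  set L := Real.log c with hLdef
  have hL0 : 0 ≤ L := Real.log_nonneg hc1
  -- powers of a
  have hp1 : ∀ n : ℕ, (1:ℝ) ≤ a ^ n := fun n => one_le_pow₀ (le_of_lt ha)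
  have hp0 : ∀ n : ℕ, (0:ℝ) < a ^ n := fun n => lt_of_lt_of_le one_pos (hp1 n)
  have hlogp : ∀ n : ℕ, Real.log (a ^ n) = n * h := fun n => by rw [Real.log_pow]
  -- key ratio bound
  have key : ∀ s : ℝ, 1 ≤ s → ∀ l : ℝ, 1 ≤ l → l ≤ a →
      |Real.log (φ (l * s)) - Real.log (φ s)| ≤ L := by
    intro s hs l hl1 hla
    obtain ⟨h1, h2⟩ := hc s hs l hl1 hla
    have hφs := hpos s hs
    have hφls := hpos (l * s) (by nlinarith)
    have hr0 : 0 < φ (l * s) / φ s := div_pos hφls hφs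
    rw [← Real.log_div (ne_of_gt hφls) (ne_of_gt hφs)]
    rw [abs_le]
    constructor
    · have := Real.log_le_log (by positivity) h1
      rwa [Real.log_inv, ← hLdef] at this
    · exact Real.log_le_log hr0 h2
  set d : ℕ → ℝ := fun n => (Real.log (φ (a ^ (n+1))) - Real.log (φ (a ^ n))) / h with hddef
  have hd : ∀ n, |d n| ≤ L / h := by
    intro n
    have : a ^ (n+1) = a * a ^ n := by ring
    have hk := key (a ^ n) (hp1 n) a (le_of_lt ha) le_rfl
    rw [← this] at hk
    rw [hddef, abs_div, abs_of_pos hh]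
    gcongr
  set γ : ℝ → ℝ := fun τ => if 1 ≤ τ then d ⌊Real.log τ / h⌋₊ else 0 with hγdef
  have hγmeas : Measurable γ := by
    apply Measurable.ite (measurableSet_le measurable_const measurable_id)
    · exact (measurable_from_top (f := d)).comp
        (Nat.measurable_floor.comp (Real.measurable_log.div_const h))
    · exact measurable_const
  have hγbd : ∀ τ, |γ τ| ≤ L / h := by
    intro τ
    rw [hγdef]
    by_cases hτ : (1:ℝ) ≤ τ
    · simpa [hτ] using hd _
    · simpa [hτ] using (by positivity : (0:ℝ) ≤ L / h)
  set f : ℝ → ℝ := fun τ => γ τ / τ with hfdef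
  have hfbd : ∀ τ, |f τ| ≤ L / h := by
    intro τ
    by_cases hτ : (1:ℝ) ≤ τ
    · have hτ0 : (0:ℝ) < τ := by linarith
      rw [hfdef]
      calc |γ τ / τ| = |γ τ| / τ := by rw [abs_div, abs_of_pos hτ0]
        _ ≤ |γ τ| / 1 := by gcongr
        _ ≤ L / h := by simpa using hγbd τ
    · have : γ τ = 0 := by rw [hγdef]; simp [hτ]
      rw [hfdef]
      simpa [this] using (by positivity : (0:ℝ) ≤ L / h)
  have hfmeas : Measurable f := hγmeas.div measurable_id
  have hfint : ∀ u v : ℝ, IntervalIntegrable f volume u v := aux_ii hfmeas hfbd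
  set I : ℝ → ℝ := fun t => ∫ τ in (1:ℝ)..t, f τ with hIdef
  have hIcont : Continuous I := intervalIntegral.continuous_primitive hfint 1
  -- floor facts
  have hfloor : ∀ t : ℝ, 1 ≤ t → ∀ n : ℕ, (⌊Real.log t / h⌋₊ = n ↔
      (n:ℝ) * h ≤ Real.log t ∧ Real.log t < (n+1) * h) := by
    intro t ht n
    have h0 : 0 ≤ Real.log t / h := div_nonneg (Real.log_nonneg ht) (le_of_lt hh)
    rw [Nat.floor_eq_iff h0, le_div_iff₀ hh, div_lt_iff₀ hh]
  -- γ is d n on [a^n, a^(n+1))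
  have hγeq : ∀ (n : ℕ) (τ : ℝ), a ^ n ≤ τ → Real.log τ < (n+1) * h → γ τ = d n := by
    intro n τ hτ1 hτ2
    have h1τ : (1:ℝ) ≤ τ := le_trans (hp1 n) hτ1
    have hfl : ⌊Real.log τ / h⌋₊ = n := by
      rw [hfloor τ h1τ n]
      constructor
      · rw [← hlogp n]
        exact Real.log_le_log (hp0 n) hτ1
      · exact hτ2
    rw [hγdef]
    simp [h1τ, hfl]
  have hple : ∀ n : ℕ, a ^ n ≤ a ^ (n+1) := by
    intro n
    calc a ^ n = a ^ n * 1 := by ring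
      _ ≤ a ^ n * a := by nlinarith [hp0 n]
      _ = a ^ (n+1) := by ring
  have hne0 : ∀ (n : ℕ) (t : ℝ), a ^ n ≤ t → (0:ℝ) ∉ Set.uIcc (a ^ n) t := by
    intro n t hle hmem
    rw [Set.uIcc_of_le hle] at hmem
    have := hmem.1
    have := hp1 n
    linarith
  -- integral over one block
  have hIpow : ∀ n : ℕ, I (a ^ n) = Real.log (φ (a ^ n)) - Real.log (φ 1) := by
    intro n
    induction n with
    | zero => simp [hIdef]
    | succ n ih =>
      have hcong : (∫ τ in (a^n)..(a^(n+1)), f τ) = ∫ τ in (a^n)..(a^(n+1)), d n * (1/τ) := by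
        apply intervalIntegral.integral_congr_ae
        have h0 : ∀ᵐ τ : ℝ, τ ≠ a ^ (n+1) := by
          rw [ae_iff]
          simpa [not_not] using measure_singleton (a ^ (n+1) : ℝ)
        filter_upwards [h0] with τ hτne hτmem
        rw [Set.uIoc_of_le (hple n)] at hτmem
        have hτ0 : (0:ℝ) < τ := lt_trans (hp0 n) hτmem.1
        have hτlt : τ < a ^ (n+1) := lt_of_le_of_ne hτmem.2 hτne
        have hlog : Real.log τ < ((n:ℝ)+1) * h := by
          have h1 := Real.log_lt_log hτ0 hτlt
          rw [hlogp (n+1)] at h1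
          push_cast at h1
          linarith
        show f τ = d n * (1/τ)
        rw [hfdef]
        simp only
        rw [hγeq n τ (le_of_lt hτmem.1) (by push_cast; exact hlog)]
        ring
      have hstep : (∫ τ in (a^n)..(a^(n+1)), f τ)
          = Real.log (φ (a^(n+1))) - Real.log (φ (a^n)) := by
        rw [hcong, intervalIntegral.integral_const_mul,
          integral_one_div (hne0 n (a^(n+1)) (hple n))]
        have hlogdiv : Real.log (a^(n+1) / a^n) = h := by
          rw [Real.log_div (ne_of_gt (hp0 (n+1))) (ne_of_gt (hp0 n)), hlogp, hlogp]
          push_cast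
          ring
        rw [hlogdiv, hddef]
        field_simp
      have hadd := intervalIntegral.integral_add_adjacent_intervals
        (hfint 1 (a^n)) (hfint (a^n) (a^(n+1)))
      have hIsucc : I (a^(n+1)) = I (a^n) + ∫ τ in (a^n)..(a^(n+1)), f τ := hadd.symm
      rw [hIsucc, ih, hstep]
      ring
  refine ⟨fun t => Real.log (φ t) - I t, γ,
    (Real.measurable_log.comp hmeas).sub hIcont.measurable, hγmeas,
    ⟨2 * L + |Real.log (φ 1)|, ?_⟩, ⟨L / h, fun t _ => hγbd t⟩, ?_⟩
  · intro t ht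
    have ht0 : (0:ℝ) < t := by linarith
    set n := ⌊Real.log t / h⌋₊ with hn
    have hnfacts : (n:ℝ) * h ≤ Real.log t ∧ Real.log t < ((n:ℝ)+1) * h := by
      have := (hfloor t ht n).1 rfl
      push_cast at this
      exact this
    have hpnt : a ^ n ≤ t := by
      have h1 : Real.log (a ^ n) ≤ Real.log t := by rw [hlogp]; exact hnfacts.1
      by_contra hcon
      push_neg at hcon
      exact absurd (Real.log_lt_log ht0 hcon) (not_lt.2 h1)
    have htlt : t < a ^ (n+1) := by
      by_contra hcon
      push_neg at hcon
      have h1 := Real.log_le_log (hp0 (n+1)) hcon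
      rw [hlogp (n+1)] at h1
      push_cast at h1
      linarith [hnfacts.2]
    -- tail integral
    have hItail : (∫ τ in (a^n)..t, f τ) = d n * (Real.log t - (n:ℝ) * h) := by
      have hcong : Set.EqOn f (fun τ => d n * (1/τ)) (Set.uIcc (a^n) t) := by
        intro τ hτ
        rw [Set.uIcc_of_le hpnt] at hτ
        have hτ0 : (0:ℝ) < τ := lt_of_lt_of_le (hp0 n) hτ.1
        have hlog : Real.log τ < ((n:ℝ)+1) * h :=
          lt_of_le_of_lt (Real.log_le_log hτ0 hτ.2) hnfacts.2
        show f τ = d n * (1/τ)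
        rw [hfdef]
        simp only
        rw [hγeq n τ hτ.1 (by push_cast; exact hlog)]
        ring
      rw [intervalIntegral.integral_congr hcong, intervalIntegral.integral_const_mul,
        integral_one_div (hne0 n t hpnt),
        Real.log_div (ne_of_gt ht0) (ne_of_gt (hp0 n)), hlogp]
    have hadd := intervalIntegral.integral_add_adjacent_intervals
      (hfint 1 (a^n)) (hfint (a^n) t)
    have hIt : I t = (Real.log (φ (a^n)) - Real.log (φ 1)) + d n * (Real.log t - (n:ℝ) * h) := by
      rw [← hIpow n, ← hItail]
      exact hadd.symm
    have hb1 : |Real.log (φ t) - Real.log (φ (a^n))| ≤ L := by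
      have hl1 : 1 ≤ t / a ^ n := (one_le_div (hp0 n)).2 hpnt
      have hla : t / a ^ n ≤ a := by
        rw [div_le_iff₀ (hp0 n)]
        calc t ≤ a ^ (n+1) := le_of_lt htlt
          _ = a * a ^ n := by ring
      have := key (a ^ n) (hp1 n) (t / a ^ n) hl1 hla
      rwa [div_mul_cancel₀ _ (ne_of_gt (hp0 n))] at this
    have hb2 : |d n * (Real.log t - (n:ℝ) * h)| ≤ L := by
      rw [abs_mul]
      have h3 : |Real.log t - (n:ℝ) * h| ≤ h := by
        rw [abs_of_nonneg (by linarith [hnfacts.1])]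
        linarith [hnfacts.2]
      calc |d n| * |Real.log t - (n:ℝ) * h| ≤ (L/h) * h :=
            mul_le_mul (hd n) h3 (abs_nonneg _) (by positivity)
        _ = L := div_mul_cancel₀ L (ne_of_gt hh)
    calc |Real.log (φ t) - I t|
        = |(Real.log (φ t) - Real.log (φ (a^n))) - d n * (Real.log t - (n:ℝ) * h)
            + Real.log (φ 1)| := by rw [hIt]; congr 1; ring
      _ ≤ |(Real.log (φ t) - Real.log (φ (a^n))) - d n * (Real.log t - (n:ℝ) * h)|
            + |Real.log (φ 1)| := abs_add_le _ _
      _ ≤ (|Real.log (φ t) - Real.log (φ (a^n))| + |d n * (Real.log t - (n:ℝ) * h)|)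
            + |Real.log (φ 1)| := by gcongr; exact abs_sub _ _
      _ ≤ (L + L) + |Real.log (φ 1)| := by gcongr
      _ = 2 * L + |Real.log (φ 1)| := by ring
  · intro t ht
    have hIeq : (∫ τ in (1:ℝ)..t, γ τ / τ) = I t := rfl
    rw [hIeq, sub_add_cancel, Real.exp_log (hpos t ht)]

/-- `φ ∈ RO` if and only if `φ(t) = exp(β(t) + ∫₁ᵗ γ(τ)/τ dτ)` for `t ≥ 1`,
where `β` and `γ` are Borel measurable real-valued functions bounded on `[1,∞)`. -/
theorem statement1 (φ : ℝ → ℝ) (hmeas : Measurable φ) (hpos : ∀ t ≥ (1 : ℝ), 0 < φ t) :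
    IsRO φ ↔
      ∃ β γ : ℝ → ℝ, Measurable β ∧ Measurable γ ∧
        (∃ Mβ : ℝ, ∀ t ≥ (1 : ℝ), |β t| ≤ Mβ) ∧
        (∃ Mγ : ℝ, ∀ t ≥ (1 : ℝ), |γ t| ≤ Mγ) ∧
        ∀ t ≥ (1 : ℝ), φ t = Real.exp (β t + ∫ τ in (1 : ℝ)..t, γ τ / τ) := by
  exact ⟨fwd φ hmeas hpos, rev φ hmeas hpos⟩
end

section
/- Let φ belong to the class RO. Then the set S₀ := { s ∈ ℝ : ∃ c₀ > 0, ∀ t ≥ 1, ∀ λ ≥ 1, c₀ λ^{s} φ(t) ≤ φ(λt) } is nonempty and bounded above, the set S₁ := { s ∈ ℝ : ∃ c₁ > 0, ∀ t ≥ 1, ∀ λ ≥ 1, φ(λt) ≤ c₁ λ^{s} φ(t) } is nonempty and bounded below, and σ₀(φ) := sup S₀ and σ₁(φ) := inf S₁ satisfy −∞ < σ₀(φ) ≤ σ₁(φ) < ∞. -/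
/-- The set of lower power-bound exponents of `φ`. -/
def lowerExpSet (φ : ℝ → ℝ) : Set ℝ :=
  {s : ℝ | ∃ c₀ > (0 : ℝ), ∀ t ≥ (1 : ℝ), ∀ l ≥ (1 : ℝ), c₀ * l ^ s * φ t ≤ φ (l * t)}

/-- The set of upper power-bound exponents of `φ`. -/
def upperExpSet (φ : ℝ → ℝ) : Set ℝ :=
  {s : ℝ | ∃ c₁ > (0 : ℝ), ∀ t ≥ (1 : ℝ), ∀ l ≥ (1 : ℝ), φ (l * t) ≤ c₁ * l ^ s * φ t}

-- auxiliary lemmas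
lemma iterbound (φ : ℝ → ℝ) (a c : ℝ) (ha : 1 < a) (hc : 1 ≤ c)
    (hpos : ∀ t ≥ (1 : ℝ), 0 < φ t)
    (h : ∀ t ≥ (1 : ℝ), ∀ l, 1 ≤ l → l ≤ a →
      c⁻¹ ≤ φ (l * t) / φ t ∧ φ (l * t) / φ t ≤ c) :
    ∀ n : ℕ, ∀ t ≥ (1 : ℝ), ∀ l, 1 ≤ l → l ≤ a ^ (n + 1) →
      (c ^ (n + 1))⁻¹ * φ t ≤ φ (l * t) ∧ φ (l * t) ≤ c ^ (n + 1) * φ t := by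
  have hc0 : (0 : ℝ) < c := lt_of_lt_of_le one_pos hc
  have base : ∀ t ≥ (1 : ℝ), ∀ l, 1 ≤ l → l ≤ a →
      c⁻¹ * φ t ≤ φ (l * t) ∧ φ (l * t) ≤ c * φ t := by
    intro t ht l hl hla
    have hpt := hpos t ht
    obtain ⟨h1, h2⟩ := h t ht l hl hla
    constructor
    · calc c⁻¹ * φ t ≤ (φ (l * t) / φ t) * φ t := by
            exact mul_le_mul_of_nonneg_right h1 hpt.le
        _ = φ (l * t) := by field_simp
    · calc φ (l * t) = (φ (l * t) / φ t) * φ t := by field_simp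
        _ ≤ c * φ t := mul_le_mul_of_nonneg_right h2 hpt.le
  intro n
  induction n with
  | zero => simpa using base
  | succ n ih =>
    intro t ht l hl hla
    have hpt := hpos t ht
    by_cases hcase : l ≤ a ^ (n + 1)
    · obtain ⟨h1, h2⟩ := ih t ht l hl hcase
      have hcle : c ^ (n + 1) ≤ c ^ (n + 1 + 1) := pow_le_pow_right₀ hc (by omega)
      have hinv : (c ^ (n + 1 + 1))⁻¹ ≤ (c ^ (n + 1))⁻¹ :=
        inv_anti₀ (by positivity) hcle
      constructor
      · exact le_trans (mul_le_mul_of_nonneg_right hinv hpt.le) h1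
      · exact le_trans h2 (mul_le_mul_of_nonneg_right hcle hpt.le)
    · push_neg at hcase
      set l' := l / a with hl'def
      have ha0 : (0 : ℝ) < a := lt_trans one_pos ha
      have hl'1 : 1 ≤ l' := by
        rw [le_div_iff₀ ha0]
        have : a ≤ a ^ (n + 1) := le_self_pow₀ (le_of_lt ha) (by omega)
        linarith
      have hl'a : l' ≤ a ^ (n + 1) := by
        rw [div_le_iff₀ ha0]
        calc l ≤ a ^ (n + 2) := hla
          _ = a ^ (n + 1) * a := by ring
      have hl't : 1 ≤ l' * t := by nlinarith
      have heq : a * (l' * t) = l * t := by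
        field_simp [hl'def]
        rw [hl'def]; field_simp
      obtain ⟨h1', h2'⟩ := ih t ht l' hl'1 hl'a
      obtain ⟨h1, h2⟩ := base (l' * t) hl't a (le_of_lt ha) le_rfl
      rw [heq] at h1 h2
      constructor
      · calc (c ^ (n + 1 + 1))⁻¹ * φ t = c⁻¹ * ((c ^ (n + 1))⁻¹ * φ t) := by rw [pow_succ, mul_inv]; ring
          _ ≤ c⁻¹ * φ (l' * t) :=
            mul_le_mul_of_nonneg_left h1' (by positivity)
          _ ≤ φ (l * t) := h1
      · calc φ (l * t) ≤ c * φ (l' * t) := h2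
          _ ≤ c * (c ^ (n + 1) * φ t) := mul_le_mul_of_nonneg_left h2' hc0.le
          _ = c ^ (n + 1 + 1) * φ t := by rw [pow_succ]; ring

lemma globalbound (φ : ℝ → ℝ) (a c : ℝ) (ha : 1 < a) (hc : 1 ≤ c)
    (hpos : ∀ t ≥ (1 : ℝ), 0 < φ t)
    (h : ∀ t ≥ (1 : ℝ), ∀ l, 1 ≤ l → l ≤ a →
      c⁻¹ ≤ φ (l * t) / φ t ∧ φ (l * t) / φ t ≤ c) :
    ∀ t ≥ (1 : ℝ), ∀ l ≥ (1 : ℝ),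
      c⁻¹ * l ^ (-(Real.logb a c)) * φ t ≤ φ (l * t) ∧
      φ (l * t) ≤ c * l ^ (Real.logb a c) * φ t := by
  intro t ht l hl
  have ha0 : (0 : ℝ) < a := lt_trans one_pos ha
  have hc0 : (0 : ℝ) < c := lt_of_lt_of_le one_pos hc
  have hl0 : (0 : ℝ) < l := lt_of_lt_of_le one_pos hl
  set σ : ℝ := Real.logb a c with hσ
  have hσ0 : 0 ≤ σ := Real.logb_nonneg ha hc
  set n : ℕ := ⌊Real.logb a l⌋₊ with hn
  have hlogb0 : 0 ≤ Real.logb a l := Real.logb_nonneg ha hl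
  have hn1 : a ^ n ≤ l := by
    have h1 : (n : ℝ) ≤ Real.logb a l := Nat.floor_le hlogb0
    calc a ^ n = a ^ (n : ℝ) := (Real.rpow_natCast a n).symm
      _ ≤ a ^ Real.logb a l := Real.rpow_le_rpow_of_exponent_le ha.le h1
      _ = l := Real.rpow_logb ha0 (ne_of_gt ha) hl0
  have hn2 : l ≤ a ^ (n + 1) := by
    have h1 : Real.logb a l ≤ ((n : ℝ) + 1) := (Nat.lt_floor_add_one _).le
    calc l = a ^ Real.logb a l := (Real.rpow_logb ha0 (ne_of_gt ha) hl0).symm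
      _ ≤ a ^ ((n : ℝ) + 1) := Real.rpow_le_rpow_of_exponent_le ha.le h1
      _ = a ^ (n + 1) := by
        rw [← Real.rpow_natCast a (n + 1)]
        norm_num
  have hcl : c ^ n ≤ l ^ σ := by
    have hca : c = a ^ σ := (Real.rpow_logb ha0 (ne_of_gt ha) hc0).symm
    calc c ^ n = (a ^ σ) ^ n := by rw [← hca]
      _ = a ^ (σ * n) := by
        rw [← Real.rpow_natCast (a ^ σ) n, ← Real.rpow_mul ha0.le]
      _ = (a ^ n) ^ σ := by
        rw [← Real.rpow_natCast a n, ← Real.rpow_mul ha0.le, mul_comm]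
      _ ≤ l ^ σ := Real.rpow_le_rpow (by positivity) hn1 hσ0
  obtain ⟨h1, h2⟩ := iterbound φ a c ha hc hpos h n t ht l hl hn2
  have hpt := hpos t ht
  constructor
  · calc c⁻¹ * l ^ (-σ) * φ t = c⁻¹ * (l ^ σ)⁻¹ * φ t := by rw [Real.rpow_neg hl0.le]
      _ ≤ c⁻¹ * (c ^ n)⁻¹ * φ t := by
        have : (l ^ σ)⁻¹ ≤ (c ^ n)⁻¹ := inv_anti₀ (by positivity) hcl
        have h0 : (0:ℝ) ≤ c⁻¹ := by positivity
        nlinarith [mul_le_mul_of_nonneg_left this h0]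
      _ = (c ^ (n + 1))⁻¹ * φ t := by rw [pow_succ, mul_inv]; ring
      _ ≤ φ (l * t) := h1
  · calc φ (l * t) ≤ c ^ (n + 1) * φ t := h2
      _ = c * c ^ n * φ t := by rw [pow_succ]; ring
      _ ≤ c * l ^ σ * φ t := by nlinarith [mul_le_mul_of_nonneg_left hcl hc0.le]

/-- For `φ ∈ RO`, the set `S₀` of lower exponents is nonempty and bounded
above, the set `S₁` of upper exponents is nonempty and bounded below, and the Matuszewska
indices `σ₀(φ) := sup S₀` and `σ₁(φ) := inf S₁` satisfy `−∞ < σ₀(φ) ≤ σ₁(φ) < ∞`. -/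
theorem statement2 (φ : ℝ → ℝ) (hφ : IsRO φ) :
    (lowerExpSet φ).Nonempty ∧ BddAbove (lowerExpSet φ) ∧
    (upperExpSet φ).Nonempty ∧ BddBelow (upperExpSet φ) ∧
    sSup (lowerExpSet φ) ≤ sInf (upperExpSet φ) := by
  obtain ⟨hmeas, hpos, a, ha, c, hc, h⟩ := hφ
  have hc0 : (0 : ℝ) < c := lt_of_lt_of_le one_pos hc
  have gb := globalbound φ a c ha hc hpos h
  have hlow : -(Real.logb a c) ∈ lowerExpSet φ := by
    refine ⟨c⁻¹, by positivity, fun t ht l hl => (gb t ht l hl).1⟩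
  have hup : Real.logb a c ∈ upperExpSet φ := by
    refine ⟨c, hc0, fun t ht l hl => (gb t ht l hl).2⟩
  have hne₀ : (lowerExpSet φ).Nonempty := ⟨_, hlow⟩
  have hne₁ : (upperExpSet φ).Nonempty := ⟨_, hup⟩
  -- every lower exponent is ≤ every upper exponent
  have key : ∀ s ∈ lowerExpSet φ, ∀ s' ∈ upperExpSet φ, s ≤ s' := by
    intro s hs s' hs'
    obtain ⟨c₀, hc₀, h₀⟩ := hs
    obtain ⟨c₁, hc₁, h₁⟩ := hs'
    by_contra hlt
    push_neg at hlt
    have hφ1 := hpos 1 le_rfl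
    have hbd : ∀ l ≥ (1:ℝ), c₀ * l ^ (s - s') ≤ c₁ := by
      intro l hl
      have hl0 : (0:ℝ) < l := lt_of_lt_of_le one_pos hl
      have h0 := h₀ 1 le_rfl l hl
      have h1 := h₁ 1 le_rfl l hl
      have h2 : c₀ * l ^ s ≤ c₁ * l ^ s' := by
        have := le_trans h0 h1
        exact le_of_mul_le_mul_right (by linarith [this]) hφ1
      have hrs : l ^ (s - s') * l ^ s' = l ^ s := by
        rw [← Real.rpow_add hl0]; ring_nf
      have hls' : (0:ℝ) < l ^ s' := Real.rpow_pos_of_pos hl0 s'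
      have : (c₀ * l ^ (s - s')) * l ^ s' ≤ c₁ * l ^ s' := by
        rw [mul_assoc, hrs]; exact h2
      exact le_of_mul_le_mul_right this hls'
    have htend : Filter.Tendsto (fun x : ℝ => x ^ (s - s')) Filter.atTop Filter.atTop :=
      tendsto_rpow_atTop (by linarith)
    obtain ⟨x, hx1, hx2⟩ := ((htend.eventually_gt_atTop (c₁ / c₀)).and
      (Filter.eventually_ge_atTop (1:ℝ))).exists
    have := hbd x hx2
    have : c₁ / c₀ < x ^ (s - s') := hx1
    have : c₁ < c₀ * x ^ (s - s') := by
      rw [div_lt_iff₀ hc₀] at hx1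
      linarith [hx1]
    linarith [hbd x hx2]
  refine ⟨hne₀, ⟨Real.logb a c, fun s hs => key s hs _ hup⟩,
    hne₁, ⟨-(Real.logb a c), fun s hs => key _ hlow s hs⟩, ?_⟩
  exact csSup_le hne₀ fun s hs => le_csInf hne₁ fun s' hs' => key s hs s' hs'
end

section
/- Let α belong to the class RO and suppose σ₀(α) > 0. Then there exists a number c₂ ≥ 1 such that c₂⁻¹ α(t₁ + t₂) ≤ α(t₁) + α(t₂) ≤ c₂ α(t₁ + t₂) for all t₁, t₂ ≥ 1. -/
/-- The lower Matuszewska index `σ₀(φ)`. -/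
noncomputable def sigma0 (φ : ℝ → ℝ) : ℝ :=
  sSup {s : ℝ | ∃ c₀ > (0 : ℝ), ∀ t ≥ (1 : ℝ), ∀ l ≥ (1 : ℝ), c₀ * l ^ s * φ t ≤ φ (l * t)}

/-- The upper Matuszewska index `σ₁(φ)`. -/
noncomputable def sigma1 (φ : ℝ → ℝ) : ℝ :=
  sInf {s : ℝ | ∃ c₁ > (0 : ℝ), ∀ t ≥ (1 : ℝ), ∀ l ≥ (1 : ℝ), φ (l * t) ≤ c₁ * l ^ s * φ t}

/-- If `α ∈ RO` and `σ₀(α) > 0`, then there is `c₂ ≥ 1` such that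
`c₂⁻¹ α(t₁+t₂) ≤ α(t₁) + α(t₂) ≤ c₂ α(t₁+t₂)` for all `t₁, t₂ ≥ 1`. -/
theorem statement8 (α : ℝ → ℝ) (hα : IsRO α) (h0 : 0 < sigma0 α) :
    ∃ c₂ ≥ (1 : ℝ), ∀ t₁ ≥ (1 : ℝ), ∀ t₂ ≥ (1 : ℝ),
      c₂⁻¹ * α (t₁ + t₂) ≤ α t₁ + α t₂ ∧ α t₁ + α t₂ ≤ c₂ * α (t₁ + t₂) := by
  obtain ⟨hmeas, hpos, a, ha, c, hc, hRO⟩ := hα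
  -- extract a positive exponent in the defining set of sigma0
  have hne : {s : ℝ | ∃ c₀ > (0:ℝ), ∀ t ≥ (1:ℝ), ∀ l ≥ (1:ℝ),
      c₀ * l ^ s * α t ≤ α (l * t)}.Nonempty := by
    by_contra h
    rw [Set.not_nonempty_iff_eq_empty] at h
    simp only [sigma0] at h0
    rw [h, Real.sSup_empty] at h0
    exact lt_irrefl 0 h0
  have h0' : (0:ℝ) < sSup {s : ℝ | ∃ c₀ > (0:ℝ), ∀ t ≥ (1:ℝ), ∀ l ≥ (1:ℝ),
      c₀ * l ^ s * α t ≤ α (l * t)} := h0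
  obtain ⟨s, hsmem, hs⟩ := exists_lt_of_lt_csSup hne h0'
  obtain ⟨c₀, hc₀, hlow⟩ := hsmem
  -- single-step RO upper bound
  have step : ∀ t ≥ (1:ℝ), ∀ l, 1 ≤ l → l ≤ a → α (l * t) ≤ c * α t := by
    intro t ht l hl1 hla
    have h2 := (hRO t ht l hl1 hla).2
    have hp := hpos t ht
    exact (div_le_iff₀ hp).mp h2
  -- iterated bound
  have key : ∀ k : ℕ, ∀ t ≥ (1:ℝ), ∀ l, 1 ≤ l → l ≤ a ^ k → α (l * t) ≤ c ^ k * α t := by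
    intro k
    induction k with
    | zero =>
      intro t ht l hl1 hla
      have : l = 1 := le_antisymm (by simpa using hla) hl1
      simp [this]
    | succ k ih =>
      intro t ht l hl1 hla
      by_cases h : l ≤ a ^ k
      · have h1 := ih t ht l hl1 h
        have h2 : c ^ k ≤ c ^ (k + 1) := pow_le_pow_right₀ hc (Nat.le_succ k)
        have hp := (hpos t ht).le
        calc α (l * t) ≤ c ^ k * α t := h1
          _ ≤ c ^ (k + 1) * α t := mul_le_mul_of_nonneg_right h2 hp
      · push_neg at h
        have hak : (1:ℝ) ≤ a ^ k := one_le_pow₀ ha.le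
        have hakpos : (0:ℝ) < a ^ k := lt_of_lt_of_le zero_lt_one hak
        have hl' : 1 ≤ l / a ^ k := (one_le_div hakpos).mpr h.le
        have hl'a : l / a ^ k ≤ a := by
          rw [div_le_iff₀ hakpos]
          calc l ≤ a ^ (k + 1) := hla
            _ = a * a ^ k := by ring
        have htk : (1:ℝ) ≤ a ^ k * t := by nlinarith
        have h1 : α ((l / a ^ k) * (a ^ k * t)) ≤ c * α (a ^ k * t) :=
          step (a ^ k * t) htk _ hl' hl'a
        have h2 : α ((a ^ k) * t) ≤ c ^ k * α t := ih t ht (a ^ k) hak le_rfl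
        have heq : (l / a ^ k) * (a ^ k * t) = l * t := by
          field_simp
        rw [heq] at h1
        have hcpos : (0:ℝ) < c := lt_of_lt_of_le zero_lt_one hc
        calc α (l * t) ≤ c * α (a ^ k * t) := h1
          _ ≤ c * (c ^ k * α t) := by nlinarith
          _ = c ^ (k + 1) * α t := by ring
  -- choose n with 2 ≤ a ^ n
  obtain ⟨n, hn⟩ := pow_unbounded_of_one_lt (2:ℝ) ha
  have hM1 : (1:ℝ) ≤ c ^ n := one_le_pow₀ hc
  -- bound for l ∈ [1, 2]
  have key2 : ∀ t ≥ (1:ℝ), ∀ l, 1 ≤ l → l ≤ 2 → α (l * t) ≤ c ^ n * α t := by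
    intro t ht l hl1 hl2
    exact key n t ht l hl1 (le_trans hl2 hn.le)
  -- c₀ ≤ 1
  have hα1 := hpos 1 le_rfl
  have hc₀1 : c₀ ≤ 1 := by
    have := hlow 1 le_rfl 1 le_rfl
    rw [Real.one_rpow, one_mul, mul_one] at this
    nlinarith
  -- the single-term lower bound: α tᵢ ≤ c₀⁻¹ α(t₁+t₂)
  have termbd : ∀ t₁ ≥ (1:ℝ), ∀ t₂ ≥ (1:ℝ), c₀ * α t₁ ≤ α (t₁ + t₂) := by
    intro t₁ ht₁ t₂ ht₂
    have ht₁0 : (0:ℝ) < t₁ := by linarith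
    have hl : (1:ℝ) ≤ (t₁ + t₂) / t₁ := by
      rw [le_div_iff₀ ht₁0]; linarith
    have h1 := hlow t₁ ht₁ ((t₁ + t₂) / t₁) hl
    have heq : (t₁ + t₂) / t₁ * t₁ = t₁ + t₂ := div_mul_cancel₀ _ (ne_of_gt ht₁0)
    rw [heq] at h1
    have hls : (1:ℝ) ≤ ((t₁ + t₂) / t₁) ^ s := Real.one_le_rpow hl hs.le
    have h3 : c₀ * α t₁ * 1 ≤ c₀ * α t₁ * ((t₁ + t₂) / t₁) ^ s :=
      mul_le_mul_of_nonneg_left hls (mul_nonneg hc₀.le (hpos t₁ ht₁).le)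
    nlinarith
  refine ⟨max (c ^ n) (2 / c₀), le_trans hM1 (le_max_left _ _), ?_⟩
  intro t₁ ht₁ t₂ ht₂
  have hp1 := hpos t₁ ht₁
  have hp2 := hpos t₂ ht₂
  have hpsum := hpos (t₁ + t₂) (by linarith)
  have hc₂pos : (0:ℝ) < max (c ^ n) (2 / c₀) :=
    lt_of_lt_of_le zero_lt_one (le_trans hM1 (le_max_left _ _))
  constructor
  · -- lower bound: α(t₁+t₂) ≤ c^n * (α t₁ + α t₂) via max
    have hmaxt : (1:ℝ) ≤ max t₁ t₂ := le_max_of_le_left ht₁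
    have hmaxt0 : (0:ℝ) < max t₁ t₂ := by linarith
    have hl1 : (1:ℝ) ≤ (t₁ + t₂) / max t₁ t₂ := by
      rw [le_div_iff₀ hmaxt0]
      rcases max_cases t₁ t₂ with ⟨h, _⟩ | ⟨h, _⟩ <;> rw [h] <;> linarith
    have hl2 : (t₁ + t₂) / max t₁ t₂ ≤ 2 := by
      rw [div_le_iff₀ hmaxt0]
      rcases max_cases t₁ t₂ with ⟨h, h'⟩ | ⟨h, h'⟩ <;> rw [h] <;> linarith
    have h1 := key2 (max t₁ t₂) hmaxt _ hl1 hl2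
    have heq : (t₁ + t₂) / max t₁ t₂ * max t₁ t₂ = t₁ + t₂ :=
      div_mul_cancel₀ _ (ne_of_gt hmaxt0)
    rw [heq] at h1
    have hmaxle : α (max t₁ t₂) ≤ α t₁ + α t₂ := by
      rcases max_cases t₁ t₂ with ⟨h, _⟩ | ⟨h, _⟩ <;> rw [h] <;> linarith
    have h2 : α (t₁ + t₂) ≤ c ^ n * (α t₁ + α t₂) := by
      calc α (t₁ + t₂) ≤ c ^ n * α (max t₁ t₂) := h1
        _ ≤ c ^ n * (α t₁ + α t₂) := by nlinarith
    have hMle : c ^ n ≤ max (c ^ n) (2 / c₀) := le_max_left _ _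
    rw [inv_mul_le_iff₀ hc₂pos]
    calc α (t₁ + t₂) ≤ c ^ n * (α t₁ + α t₂) := h2
      _ ≤ max (c ^ n) (2 / c₀) * (α t₁ + α t₂) := by nlinarith
  · -- upper bound
    have h1 := termbd t₁ ht₁ t₂ ht₂
    have h2 := termbd t₂ ht₂ t₁ ht₁
    rw [add_comm t₂ t₁] at h2
    have : α t₁ + α t₂ ≤ 2 / c₀ * α (t₁ + t₂) := by
      rw [div_mul_eq_mul_div, le_div_iff₀ hc₀]
      nlinarith
    calc α t₁ + α t₂ ≤ 2 / c₀ * α (t₁ + t₂) := this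
      _ ≤ max (c ^ n) (2 / c₀) * α (t₁ + t₂) := by
          have := le_max_right (c ^ n) (2 / c₀)
          nlinarith
end

section
/- Let n ≥ 1 and let α belong to the class RO with σ₀(α) > 0. Then there exists a number c₁ ≥ 1, independent of the parameter p, such that for every p ≥ 1 and every measurable function g : ℝⁿ → ℂ the following inequalities hold (as inequalities of Lebesgue integrals with values in [0,∞]): c₁⁻² ∫_{ℝⁿ} α(⟨ξ⟩ + p)² |g(ξ)|² dξ ≤ ∫_{ℝⁿ} ( α(⟨ξ⟩)² + α(p)² ) |g(ξ)|² dξ ≤ c₁² ∫_{ℝⁿ} α(⟨ξ⟩ + p)² |g(ξ)|² dξ. (On the Fourier side this expresses the uniform equivalence, with respect to p ≥ 1, of the parameter-dependent norms ‖w‖_{α,p,ℝⁿ} = (‖w‖²_{H^{α}(ℝⁿ)} + α(p)²‖w‖²_{L²(ℝⁿ)})^{1/2} and ‖w‖'_{α,p,ℝⁿ} = (∫ α(⟨ξ⟩+p)²|ŵ(ξ)|²dξ)^{1/2} on H^{α}(ℝⁿ).) -/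
open MeasureTheory

/-- The smoothed modulus `⟨ξ⟩ := (1 + |ξ|²)^{1/2}` of `ξ ∈ ℝⁿ`. -/
noncomputable def smoothedModulus {n : ℕ} (ξ : EuclideanSpace ℝ (Fin n)) : ℝ :=
  Real.sqrt (1 + ‖ξ‖ ^ 2)

set_option maxHeartbeats 1000000 in
/-- If `α ∈ RO` with `σ₀(α) > 0`, then there is `c₁ ≥ 1`, independent of
`p`, such that for every `p ≥ 1` and every measurable `g : ℝⁿ → ℂ`,
`c₁⁻² ∫ α(⟨ξ⟩+p)²|g(ξ)|² dξ ≤ ∫ (α(⟨ξ⟩)² + α(p)²)|g(ξ)|² dξ ≤ c₁² ∫ α(⟨ξ⟩+p)²|g(ξ)|² dξ`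
(uniform equivalence of the parameter-dependent norms `‖·‖_{α,p}` and `‖·‖'_{α,p}`). -/
theorem statement10 (n : ℕ) (hn : 1 ≤ n) (α : ℝ → ℝ) (hα : IsRO α) (h0 : 0 < sigma0 α) :
    ∃ c₁ ≥ (1 : ℝ), ∀ p ≥ (1 : ℝ), ∀ g : EuclideanSpace ℝ (Fin n) → ℂ, Measurable g →
      ((ENNReal.ofReal (c₁ ^ 2))⁻¹ *
          ∫⁻ ξ, ENNReal.ofReal (α (smoothedModulus ξ + p) ^ 2 * ‖g ξ‖ ^ 2) ≤
        ∫⁻ ξ, ENNReal.ofReal ((α (smoothedModulus ξ) ^ 2 + α p ^ 2) * ‖g ξ‖ ^ 2)) ∧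
      (∫⁻ ξ, ENNReal.ofReal ((α (smoothedModulus ξ) ^ 2 + α p ^ 2) * ‖g ξ‖ ^ 2) ≤
        ENNReal.ofReal (c₁ ^ 2) *
          ∫⁻ ξ, ENNReal.ofReal (α (smoothedModulus ξ + p) ^ 2 * ‖g ξ‖ ^ 2)) := by
  obtain ⟨hmeas, hpos, a, ha, c, hc, hbd⟩ := hα
  -- iterated RO upper bound
  have key : ∀ k : ℕ, ∀ t ≥ (1:ℝ), ∀ l, 1 ≤ l → l ≤ a ^ k → α (l * t) ≤ c ^ k * α t := by
    intro k
    induction k with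
    | zero =>
      intro t ht l hl1 hl2
      simp only [pow_zero] at hl2 ⊢
      have : l = 1 := le_antisymm hl2 hl1
      simp [this]
    | succ k ih =>
      intro t ht l hl1 hl2
      by_cases hla : l ≤ a
      · have h1 := (hbd t ht l hl1 hla).2
        have hat : 0 < α t := hpos t ht
        have h2 : α (l * t) ≤ c * α t := (div_le_iff₀ hat).mp h1
        calc α (l * t) ≤ c * α t := h2
          _ ≤ c ^ (k+1) * α t := by
              apply mul_le_mul_of_nonneg_right _ hat.le
              calc c = c ^ 1 := (pow_one c).symm
                _ ≤ c ^ (k+1) := pow_le_pow_right₀ hc (by omega)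
      · push_neg at hla
        have ha0 : (0:ℝ) < a := lt_trans one_pos ha
        have hl'1 : 1 ≤ l / a := (le_div_iff₀ ha0).mpr (by linarith)
        have hl'2 : l / a ≤ a ^ k := by
          rw [div_le_iff₀ ha0]
          calc l ≤ a ^ (k+1) := hl2
            _ = a ^ k * a := by ring
        have hlt1 : (1:ℝ) ≤ l / a * t := one_le_mul_of_one_le_of_one_le hl'1 ht
        have h1 := (hbd (l / a * t) hlt1 a (le_of_lt ha) le_rfl).2
        have hat : 0 < α (l / a * t) := hpos _ hlt1
        have h2 : α (a * (l / a * t)) ≤ c * α (l / a * t) := (div_le_iff₀ hat).mp h1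
        have heq : a * (l / a * t) = l * t := by field_simp
        rw [heq] at h2
        calc α (l * t) ≤ c * α (l / a * t) := h2
          _ ≤ c * (c ^ k * α t) :=
              mul_le_mul_of_nonneg_left (ih t ht _ hl'1 hl'2) (by linarith)
          _ = c ^ (k+1) * α t := by ring
  obtain ⟨k, hk⟩ := pow_unbounded_of_one_lt (2:ℝ) ha
  set C : ℝ := c ^ k with hC
  have hC1 : (1:ℝ) ≤ C := one_le_pow₀ hc
  have hup : ∀ t ≥ (1:ℝ), ∀ l, 1 ≤ l → l ≤ 2 → α (l * t) ≤ C * α t := by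
    intro t ht l hl1 hl2
    exact key k t ht l hl1 (le_trans hl2 hk.le)
  -- positive lower Matuszewska index gives almost increasingness
  have hexists : ∃ s > (0:ℝ), ∃ c₀ > (0:ℝ),
      ∀ t ≥ (1:ℝ), ∀ l ≥ (1:ℝ), c₀ * l ^ s * α t ≤ α (l * t) := by
    by_contra hcon
    push_neg at hcon
    have hle : sigma0 α ≤ 0 := by
      apply Real.sSup_le _ le_rfl
      rintro s ⟨c₀, hc₀, hs⟩
      by_contra hs0
      push_neg at hs0
      obtain ⟨t, ht, l, hl, hlt⟩ := hcon s hs0 c₀ hc₀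
      exact absurd (hs t ht l hl) (not_le.mpr hlt)
    linarith
  obtain ⟨s, hs0, c₀, hc₀, hlow⟩ := hexists
  have hc₀inv : (0:ℝ) < c₀⁻¹ := inv_pos.mpr hc₀
  set c₁ : ℝ := Real.sqrt 2 * (c₀⁻¹ + C) with hc₁def
  have hsqrt2 : (1:ℝ) ≤ Real.sqrt 2 := by
    rw [show (1:ℝ) = Real.sqrt 1 from (Real.sqrt_one).symm]
    exact Real.sqrt_le_sqrt (by norm_num)
  have hc₁1 : (1:ℝ) ≤ c₁ := by
    have : (1:ℝ) ≤ c₀⁻¹ + C := by linarith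
    nlinarith
  have hc₁sq : c₁ ^ 2 = 2 * (c₀⁻¹ + C) ^ 2 := by
    have h2 : Real.sqrt 2 ^ 2 = 2 := Real.sq_sqrt (by norm_num)
    rw [hc₁def]; nlinarith [h2]
  -- pointwise two-sided estimate
  have hpt : ∀ p ≥ (1:ℝ), ∀ t ≥ (1:ℝ),
      α (t + p) ^ 2 ≤ c₁ ^ 2 * (α t ^ 2 + α p ^ 2) ∧
      α t ^ 2 + α p ^ 2 ≤ c₁ ^ 2 * α (t + p) ^ 2 := by
    intro p hp t ht
    set m : ℝ := max t p with hm
    have hm1 : (1:ℝ) ≤ m := le_trans ht (le_max_left t p)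
    have hm0 : (0:ℝ) < m := lt_of_lt_of_le one_pos hm1
    have hmle : m ≤ t + p := max_le (by linarith) (by linarith)
    have hl1 : (1:ℝ) ≤ (t + p) / m := (le_div_iff₀ hm0).mpr (by linarith)
    have hl2 : (t + p) / m ≤ 2 := (div_le_iff₀ hm0).mpr
      (by rcases max_choice t p with h | h <;> rw [hm, h] <;>
          [linarith [le_max_right t p, max_eq_left_iff.mp h];
           linarith [le_max_left t p, max_eq_right_iff.mp h]])
    have hA' : α (t + p) ≤ C * α m := by
      have h := hup m hm1 _ hl1 hl2
      rwa [div_mul_cancel₀ _ hm0.ne'] at h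
    have hαm : α m ^ 2 ≤ α t ^ 2 + α p ^ 2 := by
      rcases max_choice t p with h | h <;> rw [hm, h] <;>
        nlinarith [sq_nonneg (α p), sq_nonneg (α t)]
    have hposm : 0 < α m := hpos m hm1
    have hpostp : 0 < α (t + p) := hpos _ (by linarith)
    have hpost : 0 < α t := hpos t ht
    have hposp : 0 < α p := hpos p hp
    -- almost increasing: α t ≤ c₀⁻¹ α (t+p) and α p ≤ c₀⁻¹ α (t+p)
    have hinc : ∀ u ≥ (1:ℝ), ∀ v, u ≤ v → α u ≤ c₀⁻¹ * α v := by
      intro u hu v huv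
      have hu0 : (0:ℝ) < u := lt_of_lt_of_le one_pos hu
      have hl : 1 ≤ v / u := (le_div_iff₀ hu0).mpr (by linarith)
      have h := hlow u hu (v / u) hl
      rw [div_mul_cancel₀ _ hu0.ne'] at h
      have hrs : (1:ℝ) ≤ (v / u) ^ s := Real.one_le_rpow hl hs0.le
      have hαu : 0 < α u := hpos u hu
      have h2 : c₀ * α u ≤ α v :=
        calc c₀ * α u = (c₀ * 1) * α u := by ring
          _ ≤ (c₀ * (v / u) ^ s) * α u :=
              mul_le_mul_of_nonneg_right (mul_le_mul_of_nonneg_left hrs hc₀.le) hαu.le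
          _ ≤ α v := h
      calc α u = c₀⁻¹ * (c₀ * α u) := by field_simp
        _ ≤ c₀⁻¹ * α v := mul_le_mul_of_nonneg_left h2 hc₀inv.le
    have hat : α t ≤ c₀⁻¹ * α (t + p) := hinc t ht (t + p) (by linarith)
    have hap : α p ≤ c₀⁻¹ * α (t + p) := by
      have := hinc p hp (t + p) (by linarith)
      linarith
    have hC0 : (0:ℝ) < C := lt_of_lt_of_le one_pos hC1
    constructor
    · have hCle : C ^ 2 ≤ c₁ ^ 2 := by nlinarith [sq_nonneg c₀⁻¹, mul_pos hc₀inv hC0]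
      calc α (t + p) ^ 2 ≤ (C * α m) ^ 2 := pow_le_pow_left₀ hpostp.le hA' 2
        _ = C ^ 2 * α m ^ 2 := by ring
        _ ≤ C ^ 2 * (α t ^ 2 + α p ^ 2) := mul_le_mul_of_nonneg_left hαm (by positivity)
        _ ≤ c₁ ^ 2 * (α t ^ 2 + α p ^ 2) := mul_le_mul_of_nonneg_right hCle (by positivity)
    · have h1 : α t ^ 2 ≤ (c₀⁻¹ * α (t + p)) ^ 2 := pow_le_pow_left₀ hpost.le hat 2
      have h2 : α p ^ 2 ≤ (c₀⁻¹ * α (t + p)) ^ 2 := pow_le_pow_left₀ hposp.le hap 2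
      have h3 : 2 * (c₀⁻¹) ^ 2 ≤ c₁ ^ 2 := by nlinarith [mul_pos hc₀inv hC0, sq_nonneg C]
      calc α t ^ 2 + α p ^ 2 ≤ 2 * (c₀⁻¹) ^ 2 * α (t + p) ^ 2 := by
            have := add_le_add h1 h2; nlinarith [this]
        _ ≤ c₁ ^ 2 * α (t + p) ^ 2 := mul_le_mul_of_nonneg_right h3 (by positivity)
  refine ⟨c₁, hc₁1, fun p hp g hg => ?_⟩
  have hsm : ∀ ξ : EuclideanSpace ℝ (Fin n), (1:ℝ) ≤ smoothedModulus ξ := by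
    intro ξ
    have h : (1:ℝ) ≤ 1 + ‖ξ‖ ^ 2 := le_add_of_nonneg_right (sq_nonneg _)
    have h2 := Real.sqrt_le_sqrt h
    rw [Real.sqrt_one] at h2
    simpa [smoothedModulus] using h2
  have hc₁2 : (0:ℝ) < c₁ ^ 2 := by positivity
  have hne0 : ENNReal.ofReal (c₁ ^ 2) ≠ 0 := (ENNReal.ofReal_pos.mpr hc₁2).ne'
  have hnetop : ENNReal.ofReal (c₁ ^ 2) ≠ ⊤ := ENNReal.ofReal_ne_top
  have I1 : ∫⁻ ξ, ENNReal.ofReal (α (smoothedModulus ξ + p) ^ 2 * ‖g ξ‖ ^ 2) ≤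
      ENNReal.ofReal (c₁ ^ 2) *
        ∫⁻ ξ, ENNReal.ofReal ((α (smoothedModulus ξ) ^ 2 + α p ^ 2) * ‖g ξ‖ ^ 2) := by
    rw [← MeasureTheory.lintegral_const_mul' _ _ hnetop]
    apply MeasureTheory.lintegral_mono
    intro ξ
    dsimp only
    rw [← ENNReal.ofReal_mul hc₁2.le]
    apply ENNReal.ofReal_le_ofReal
    have h := (hpt p hp _ (hsm ξ)).1
    calc α (smoothedModulus ξ + p) ^ 2 * ‖g ξ‖ ^ 2
        ≤ (c₁ ^ 2 * (α (smoothedModulus ξ) ^ 2 + α p ^ 2)) * ‖g ξ‖ ^ 2 :=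
          mul_le_mul_of_nonneg_right h (by positivity)
      _ = c₁ ^ 2 * ((α (smoothedModulus ξ) ^ 2 + α p ^ 2) * ‖g ξ‖ ^ 2) := by ring
  have I2 : ∫⁻ ξ, ENNReal.ofReal ((α (smoothedModulus ξ) ^ 2 + α p ^ 2) * ‖g ξ‖ ^ 2) ≤
      ENNReal.ofReal (c₁ ^ 2) *
        ∫⁻ ξ, ENNReal.ofReal (α (smoothedModulus ξ + p) ^ 2 * ‖g ξ‖ ^ 2) := by
    rw [← MeasureTheory.lintegral_const_mul' _ _ hnetop]
    apply MeasureTheory.lintegral_mono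
    intro ξ
    dsimp only
    rw [← ENNReal.ofReal_mul hc₁2.le]
    apply ENNReal.ofReal_le_ofReal
    have h := (hpt p hp _ (hsm ξ)).2
    calc (α (smoothedModulus ξ) ^ 2 + α p ^ 2) * ‖g ξ‖ ^ 2
        ≤ (c₁ ^ 2 * α (smoothedModulus ξ + p) ^ 2) * ‖g ξ‖ ^ 2 :=
          mul_le_mul_of_nonneg_right h (by positivity)
      _ = c₁ ^ 2 * (α (smoothedModulus ξ + p) ^ 2 * ‖g ξ‖ ^ 2) := by ring
  exact ⟨(ENNReal.inv_mul_le_iff hne0 hnetop).mpr I1, I2⟩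
end

section
/- Let α belong to the class RO and let real numbers s₀ and s₁ satisfy s₀ < σ₀(α) and s₁ > σ₁(α). Define ψ : (0,∞) → (0,∞) by ψ(t) := t^{−s₀/(s₁−s₀)} α( t^{1/(s₁−s₀)} ) for t ≥ 1 and ψ(t) := α(1) for 0 < t < 1. Then: (a) ψ is bounded on every compact interval [a,b] with 0 < a < b < ∞, and 1/ψ is bounded on every set [r,∞) with r > 0 (i.e., ψ belongs to the class ℬ); and (b) ψ is pseudoconcave on a neighborhood of +∞, i.e., there exist a number T ≥ 1, a constant C ≥ 1, and a positive concave function ψ₁ on [T,∞) such that C⁻¹ ψ₁(t) ≤ ψ(t) ≤ C ψ₁(t) for all t ≥ T. -/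
open Real Set

private lemma one_le_rpow'' {x y : ℝ} (hx : 1 ≤ x) (hy : 0 ≤ y) : 1 ≤ x ^ y := by
  calc (1:ℝ) = 1 ^ y := (Real.one_rpow y).symm
  _ ≤ x ^ y := Real.rpow_le_rpow zero_le_one hx hy

private lemma ro_iter {α : ℝ → ℝ} (hpos : ∀ t ≥ (1:ℝ), 0 < α t) {a c : ℝ}
    (ha : 1 < a) (hc : 1 ≤ c)
    (hb : ∀ t ≥ (1:ℝ), ∀ l, 1 ≤ l → l ≤ a → c⁻¹ ≤ α (l * t) / α t ∧ α (l * t) / α t ≤ c) :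
    ∀ n : ℕ, ∀ l : ℝ, 1 ≤ l → l ≤ a ^ (n + 1) → ∀ t, 1 ≤ t →
      (c ^ (n + 1))⁻¹ * α t ≤ α (l * t) ∧ α (l * t) ≤ c ^ (n + 1) * α t := by
  have hc0 : (0:ℝ) < c := lt_of_lt_of_le one_pos hc
  intro n
  induction n with
  | zero =>
    intro l hl1 hla t ht
    have hαt := hpos t ht
    have h := hb t ht l hl1 (by simpa using hla)
    constructor
    · have := (le_div_iff₀ hαt).mp h.1
      simpa using this
    · have := (div_le_iff₀ hαt).mp h.2
      simpa [mul_comm] using this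
  | succ n ih =>
    intro l hl1 hla t ht
    by_cases hcase : l ≤ a ^ (n + 1)
    · have h := ih l hl1 hcase t ht
      have hαt := (hpos t ht).le
      have hpow : c ^ (n + 1) ≤ c ^ (n + 2) := pow_le_pow_right₀ hc (by omega)
      have hpow' : (c ^ (n + 2))⁻¹ ≤ (c ^ (n + 1))⁻¹ :=
        inv_anti₀ (pow_pos hc0 _) hpow
      exact ⟨le_trans (mul_le_mul_of_nonneg_right hpow' hαt) h.1,
        le_trans h.2 (mul_le_mul_of_nonneg_right hpow hαt)⟩
    · push_neg at hcase
      set μ := l / a with hμdef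
      have ha1 : (1:ℝ) ≤ a := ha.le
      have hapow : a ≤ a ^ (n + 1) := le_self_pow₀ ha1 (by omega)
      have hμ1 : 1 ≤ μ := by
        rw [hμdef, le_div_iff₀ (lt_trans one_pos ha)]
        have : a < l := lt_of_le_of_lt hapow hcase
        nlinarith
      have hμ2 : μ ≤ a ^ (n + 1) := by
        rw [hμdef, div_le_iff₀ (lt_trans one_pos ha)]
        calc l ≤ a ^ (n + 2) := hla
        _ = a ^ (n + 1) * a := by ring
      have hμt : 1 ≤ μ * t := one_le_mul_of_one_le_of_one_le hμ1 ht
      have hsplit : l * t = a * (μ * t) := by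
        rw [hμdef]; field_simp
      have h1 := ih μ hμ1 hμ2 t ht
      have hαμt := hpos (μ * t) hμt
      have h2 := hb (μ * t) hμt a ha1 le_rfl
      have h2l : c⁻¹ * α (μ * t) ≤ α (a * (μ * t)) := by
        have := (le_div_iff₀ hαμt).mp h2.1
        simpa using this
      have h2u : α (a * (μ * t)) ≤ c * α (μ * t) := by
        have := (div_le_iff₀ hαμt).mp h2.2
        simpa [mul_comm] using this
      constructor
      · rw [hsplit]
        calc (c ^ (n + 2))⁻¹ * α t = c⁻¹ * ((c ^ (n+1))⁻¹ * α t) := by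
              rw [← mul_assoc, ← mul_inv]; ring_nf
        _ ≤ c⁻¹ * α (μ * t) := by
              apply mul_le_mul_of_nonneg_left h1.1 (by positivity)
        _ ≤ α (a * (μ * t)) := h2l
      · rw [hsplit]
        calc α (a * (μ * t)) ≤ c * α (μ * t) := h2u
        _ ≤ c * (c ^ (n+1) * α t) := mul_le_mul_of_nonneg_left h1.2 hc0.le
        _ = c ^ (n + 2) * α t := by ring

private lemma ro_global {α : ℝ → ℝ} (hpos : ∀ t ≥ (1:ℝ), 0 < α t) {a c : ℝ}
    (ha : 1 < a) (hc : 1 ≤ c)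
    (hb : ∀ t ≥ (1:ℝ), ∀ l, 1 ≤ l → l ≤ a → c⁻¹ ≤ α (l * t) / α t ∧ α (l * t) / α t ≤ c) :
    ∃ s : ℝ, 0 ≤ s ∧ ∀ t ≥ (1:ℝ), ∀ l ≥ (1:ℝ),
      c⁻¹ * l ^ (-s) * α t ≤ α (l * t) ∧ α (l * t) ≤ c * l ^ s * α t := by
  have ha0 : (0:ℝ) < a := lt_trans one_pos ha
  have hc0 : (0:ℝ) < c := lt_of_lt_of_le one_pos hc
  refine ⟨Real.logb a c, Real.logb_nonneg ha hc, ?_⟩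
  set s := Real.logb a c with hs
  intro t ht l hl
  have hl0 : (0:ℝ) < l := lt_of_lt_of_le one_pos hl
  set n := ⌊Real.logb a l⌋₊ with hn
  have hlogb0 : 0 ≤ Real.logb a l := Real.logb_nonneg ha hl
  have hn1 : (a:ℝ) ^ (n:ℕ) ≤ l := by
    rw [← Real.rpow_natCast]
    calc a ^ (n:ℝ) ≤ a ^ (Real.logb a l) := by
          apply Real.rpow_le_rpow_of_exponent_le ha.le
          exact_mod_cast Nat.floor_le hlogb0
    _ = l := Real.rpow_logb ha0 (ne_of_gt ha) hl0
  have hn2 : l ≤ a ^ (n + 1) := by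
    have : Real.logb a l < (n:ℝ) + 1 := by
      have := Nat.lt_floor_add_one (Real.logb a l)
      push_cast at this
      convert this using 2
    calc l = a ^ (Real.logb a l) := (Real.rpow_logb ha0 (ne_of_gt ha) hl0).symm
    _ ≤ a ^ ((n:ℝ) + 1) := Real.rpow_le_rpow_of_exponent_le ha.le this.le
    _ = a ^ (n + 1 : ℕ) := by rw [← Real.rpow_natCast a (n+1)]; norm_num
  have key := ro_iter hpos ha hc hb n l hl hn2 t ht
  have hac : a ^ s = c := Real.rpow_logb ha0 (ne_of_gt ha) hc0
  have hcn : c ^ (n : ℕ) ≤ l ^ s := by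
    calc c ^ (n:ℕ) = (a ^ s) ^ (n:ℕ) := by rw [hac]
    _ = (a ^ s) ^ (n:ℝ) := by rw [Real.rpow_natCast]
    _ = a ^ (s * n) := by rw [← Real.rpow_mul ha0.le]
    _ = a ^ ((n:ℝ) * s) := by ring_nf
    _ = (a ^ (n:ℝ)) ^ s := Real.rpow_mul ha0.le _ _
    _ = ((a:ℝ) ^ (n:ℕ)) ^ s := by rw [Real.rpow_natCast]
    _ ≤ l ^ s := Real.rpow_le_rpow (by positivity) hn1 (Real.logb_nonneg ha hc)
  have hcn1 : c ^ (n + 1) ≤ c * l ^ s := by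
    calc c ^ (n + 1) = c * c ^ n := by ring
    _ ≤ c * l ^ s := mul_le_mul_of_nonneg_left hcn hc0.le
  have hαt := hpos t ht
  have e1 : c⁻¹ * l ^ (-s) * α t = (c * l ^ s)⁻¹ * α t := by
    rw [Real.rpow_neg hl0.le, mul_inv]
  have e2 : (c * l ^ s)⁻¹ * α t ≤ (c ^ (n + 1))⁻¹ * α t := by
    apply mul_le_mul_of_nonneg_right _ hαt.le
    exact inv_anti₀ (pow_pos hc0 _) hcn1
  have e3 : c ^ (n + 1) * α t ≤ c * l ^ s * α t :=
    mul_le_mul_of_nonneg_right hcn1 hαt.le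
  exact ⟨by rw [e1]; exact le_trans e2 key.1, le_trans key.2 e3⟩

set_option maxHeartbeats 2000000 in
/-- Let `α ∈ RO`, `s₀ < σ₀(α)`, `s₁ > σ₁(α)`, and let
`ψ(t) := t^{−s₀/(s₁−s₀)} α(t^{1/(s₁−s₀)})` for `t ≥ 1`, `ψ(t) := α(1)` for `0 < t < 1`.
Then (a) `ψ` is bounded on every compact interval `[a,b] ⊂ (0,∞)` and `1/ψ` is bounded on
every `[r,∞)` with `r > 0` (i.e. `ψ ∈ ℬ`); and (b) `ψ` is pseudoconcave near `+∞`: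
there are `T ≥ 1`, `C ≥ 1` and a positive concave function `ψ₁` on `[T,∞)` with
`C⁻¹ ψ₁(t) ≤ ψ(t) ≤ C ψ₁(t)` for `t ≥ T`. -/
theorem statement12 (α : ℝ → ℝ) (hα : IsRO α) (s₀ s₁ : ℝ)
    (h0 : s₀ < sigma0 α) (h1 : sigma1 α < s₁) (ψ : ℝ → ℝ)
    (hψ₁ : ∀ t ≥ (1 : ℝ), ψ t = t ^ (-s₀ / (s₁ - s₀)) * α (t ^ (1 / (s₁ - s₀))))
    (hψ₂ : ∀ t : ℝ, 0 < t → t < 1 → ψ t = α 1) :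
    ((∀ a b : ℝ, 0 < a → a < b → ∃ M : ℝ, ∀ t ∈ Set.Icc a b, ψ t ≤ M) ∧
      (∀ r > (0 : ℝ), ∃ M : ℝ, ∀ t ≥ r, (ψ t)⁻¹ ≤ M)) ∧
    ∃ T ≥ (1 : ℝ), ∃ C ≥ (1 : ℝ), ∃ ψ' : ℝ → ℝ,
      (∀ t ≥ T, 0 < ψ' t) ∧ ConcaveOn ℝ (Set.Ici T) ψ' ∧
      ∀ t ≥ T, C⁻¹ * ψ' t ≤ ψ t ∧ ψ t ≤ C * ψ' t := by
  obtain ⟨-, hpos, a, ha, c, hc, hb⟩ := hα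
  have hc0 : (0:ℝ) < c := lt_of_lt_of_le one_pos hc
  obtain ⟨s, hs0, hglob⟩ := ro_global hpos ha hc hb
  -- the two index sets
  set S1 : Set ℝ :=
    {s : ℝ | ∃ c₁ > (0 : ℝ), ∀ t ≥ (1 : ℝ), ∀ l ≥ (1 : ℝ), α (l * t) ≤ c₁ * l ^ s * α t}
    with hS1def
  set S0 : Set ℝ :=
    {s : ℝ | ∃ c₀ > (0 : ℝ), ∀ t ≥ (1 : ℝ), ∀ l ≥ (1 : ℝ), c₀ * l ^ s * α t ≤ α (l * t)}
    with hS0def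
  have hS1mem : s ∈ S1 := ⟨c, hc0, fun t ht l hl => (hglob t ht l hl).2⟩
  have hS0mem : -s ∈ S0 := ⟨c⁻¹, by positivity, fun t ht l hl => (hglob t ht l hl).1⟩
  have h1' : ∃ x ∈ S1, x < s₁ := by
    rw [sigma1] at h1
    by_cases hbdd : BddBelow S1
    · exact (csInf_lt_iff hbdd ⟨s, hS1mem⟩).mp h1
    · obtain ⟨y, hy, hy'⟩ := (not_bddBelow_iff.mp hbdd) s₁
      exact ⟨y, hy, hy'⟩
  have h0' : ∃ x ∈ S0, s₀ < x := by
    rw [sigma0] at h0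
    by_cases hbdd : BddAbove S0
    · exact (lt_csSup_iff hbdd ⟨-s, hS0mem⟩).mp h0
    · obtain ⟨y, hy, hy'⟩ := (not_bddAbove_iff.mp hbdd) s₀
      exact ⟨y, hy, hy'⟩
  obtain ⟨s₁', ⟨c₁, hc₁, hS1b⟩, hs₁'⟩ := h1'
  obtain ⟨s₀', ⟨c₀, hc₀, hS0b⟩, hs₀'⟩ := h0'
  have hα1 : 0 < α 1 := hpos 1 le_rfl
  -- s₀' ≤ s₁'
  have hord : s₀' ≤ s₁' := by
    by_contra hlt
    push_neg at hlt
    set d := s₀' - s₁' with hd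
    have hd0 : 0 < d := by simp [hd]; linarith
    set L : ℝ := (c₁ / c₀ + 1) ^ d⁻¹ with hL
    have hbase : (1:ℝ) ≤ c₁ / c₀ + 1 := by
      have : 0 ≤ c₁ / c₀ := by positivity
      linarith
    have hL1 : 1 ≤ L := one_le_rpow'' hbase (by positivity)
    have hLd : L ^ d = c₁ / c₀ + 1 := Real.rpow_inv_rpow (by positivity) (ne_of_gt hd0)
    have hL0 : 0 < L := lt_of_lt_of_le one_pos hL1
    have hlow := hS0b 1 le_rfl L hL1
    have hupp := hS1b 1 le_rfl L hL1
    have hLs : L ^ s₀' = L ^ s₁' * L ^ d := by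
      rw [← Real.rpow_add hL0]; congr 1; simp [hd]
    have hLs1 : 0 < L ^ s₁' := Real.rpow_pos_of_pos hL0 _
    have hkey : c₀ * L ^ d ≤ c₁ := by
      have h2 : c₀ * (L ^ s₁' * L ^ d) * α 1 ≤ c₁ * L ^ s₁' * α 1 := by
        rw [← hLs]; exact le_trans hlow hupp
      nlinarith [mul_pos hLs1 hα1]
    rw [hLd] at hkey
    have hcc : c₀ * (c₁ / c₀) = c₁ := mul_div_cancel₀ c₁ (ne_of_gt hc₀)
    nlinarith
  have hss : s₀ < s₁ := by linarith
  have hden : (0:ℝ) < s₁ - s₀ := by linarith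
  have hdenne : s₁ - s₀ ≠ 0 := ne_of_gt hden
  set θ : ℝ := 1 / (s₁ - s₀) with hθ
  set e : ℝ := -s₀ / (s₁ - s₀) with he
  have hθ0 : 0 < θ := by rw [hθ]; positivity
  -- key comparison bounds
  have key : ∀ t u : ℝ, 1 ≤ t → t ≤ u →
      (ψ u ≤ c₁ * (u/t) ^ ((s₁' - s₀)/(s₁ - s₀)) * ψ t ∧
       c₀ * (u/t) ^ ((s₀' - s₀)/(s₁ - s₀)) * ψ t ≤ ψ u) := by
    intro t u ht htu
    have hu : (1:ℝ) ≤ u := ht.trans htu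
    have ht0 : (0:ℝ) < t := lt_of_lt_of_le one_pos ht
    have hu0 : (0:ℝ) < u := lt_of_lt_of_le one_pos hu
    have hdiv0 : (0:ℝ) < u / t := by positivity
    have hd1 : (1:ℝ) ≤ u / t := (one_le_div ht0).mpr htu
    have htθ : (1:ℝ) ≤ t ^ θ := one_le_rpow'' ht hθ0.le
    have hlam1 : (1:ℝ) ≤ (u/t) ^ θ := one_le_rpow'' hd1 hθ0.le
    have hmul : (u/t) ^ θ * t ^ θ = u ^ θ := by
      rw [← Real.mul_rpow hdiv0.le ht0.le, div_mul_cancel₀ _ (ne_of_gt ht0)]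
    have hup1 : α (u ^ θ) ≤ c₁ * (u/t) ^ (θ * s₁') * α (t ^ θ) := by
      have h := hS1b (t ^ θ) htθ ((u/t) ^ θ) hlam1
      rw [hmul] at h
      rwa [← Real.rpow_mul hdiv0.le] at h
    have hlo1 : c₀ * (u/t) ^ (θ * s₀') * α (t ^ θ) ≤ α (u ^ θ) := by
      have h := hS0b (t ^ θ) htθ ((u/t) ^ θ) hlam1
      rw [hmul] at h
      rwa [← Real.rpow_mul hdiv0.le] at h
    have hue : u ^ e = (u/t) ^ e * t ^ e := by
      rw [← Real.mul_rpow hdiv0.le ht0.le, div_mul_cancel₀ _ (ne_of_gt ht0)]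
    have hψu : ψ u = u ^ e * α (u ^ θ) := hψ₁ u hu
    have hψt : ψ t = t ^ e * α (t ^ θ) := hψ₁ t ht
    have hue0 : (0:ℝ) ≤ u ^ e := (Real.rpow_pos_of_pos hu0 _).le
    have hexp1 : e + θ * s₁' = (s₁' - s₀)/(s₁ - s₀) := by
      rw [he, hθ]; field_simp; ring
    have hexp0 : e + θ * s₀' = (s₀' - s₀)/(s₁ - s₀) := by
      rw [he, hθ]; field_simp; ring
    have hadd1 : (u/t) ^ e * (u/t) ^ (θ * s₁') = (u/t) ^ ((s₁' - s₀)/(s₁ - s₀)) := by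
      rw [← Real.rpow_add hdiv0, hexp1]
    have hadd0 : (u/t) ^ e * (u/t) ^ (θ * s₀') = (u/t) ^ ((s₀' - s₀)/(s₁ - s₀)) := by
      rw [← Real.rpow_add hdiv0, hexp0]
    constructor
    · calc ψ u = u ^ e * α (u ^ θ) := hψu
        _ ≤ u ^ e * (c₁ * (u/t) ^ (θ * s₁') * α (t ^ θ)) :=
            mul_le_mul_of_nonneg_left hup1 hue0
        _ = c₁ * ((u/t) ^ e * (u/t) ^ (θ * s₁')) * (t ^ e * α (t ^ θ)) := by
            rw [hue]; ring
        _ = c₁ * (u/t) ^ ((s₁' - s₀)/(s₁ - s₀)) * ψ t := by rw [hadd1, hψt]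
    · calc c₀ * (u/t) ^ ((s₀' - s₀)/(s₁ - s₀)) * ψ t
          = u ^ e * (c₀ * (u/t) ^ (θ * s₀') * α (t ^ θ)) := by
            rw [hψt, ← hadd0, hue]; ring
        _ ≤ u ^ e * α (u ^ θ) := mul_le_mul_of_nonneg_left hlo1 hue0
        _ = ψ u := hψu.symm
  -- simplified monotonicity bounds
  have hψpos : ∀ t : ℝ, 1 ≤ t → 0 < ψ t := by
    intro t ht
    have ht0 : (0:ℝ) < t := lt_of_lt_of_le one_pos ht
    rw [hψ₁ t ht]
    have h1 : 0 < t ^ e := Real.rpow_pos_of_pos ht0 _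
    have h2 : 0 < α (t ^ θ) := hpos _ (one_le_rpow'' ht hθ0.le)
    exact mul_pos h1 h2
  have hup : ∀ t u : ℝ, 1 ≤ t → t ≤ u → ψ u ≤ c₁ * (u/t) * ψ t := by
    intro t u ht htu
    have ht0 : (0:ℝ) < t := lt_of_lt_of_le one_pos ht
    have hd1 : (1:ℝ) ≤ u / t := (one_le_div ht0).mpr htu
    have hβ : (s₁' - s₀)/(s₁ - s₀) ≤ 1 := by
      rw [div_le_one hden]; linarith
    have hr : (u/t) ^ ((s₁' - s₀)/(s₁ - s₀)) ≤ u/t := by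
      calc (u/t) ^ ((s₁' - s₀)/(s₁ - s₀)) ≤ (u/t) ^ (1:ℝ) :=
            Real.rpow_le_rpow_of_exponent_le hd1 hβ
        _ = u/t := Real.rpow_one _
    have := (key t u ht htu).1
    have hψt := hψpos t ht
    nlinarith [mul_pos hc₁ hψt]
  have hlo : ∀ t u : ℝ, 1 ≤ t → t ≤ u → c₀ * ψ t ≤ ψ u := by
    intro t u ht htu
    have ht0 : (0:ℝ) < t := lt_of_lt_of_le one_pos ht
    have hd1 : (1:ℝ) ≤ u / t := (one_le_div ht0).mpr htu
    have hβ : 0 ≤ (s₀' - s₀)/(s₁ - s₀) := div_nonneg (by linarith) hden.le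
    have hr : (1:ℝ) ≤ (u/t) ^ ((s₀' - s₀)/(s₁ - s₀)) := one_le_rpow'' hd1 hβ
    have := (key t u ht htu).2
    have hψt := hψpos t ht
    nlinarith [mul_pos hc₀ hψt]
  have hψ1val : ψ 1 = α 1 := by
    rw [hψ₁ 1 le_rfl, Real.one_rpow, Real.one_rpow, one_mul]
  -- Part (a)
  have parta : (∀ a b : ℝ, 0 < a → a < b → ∃ M : ℝ, ∀ t ∈ Set.Icc a b, ψ t ≤ M) ∧
      (∀ r > (0 : ℝ), ∃ M : ℝ, ∀ t ≥ r, (ψ t)⁻¹ ≤ M) := by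
    constructor
    · intro A B hA hAB
      refine ⟨max (α 1) (c₁ * B * α 1), ?_⟩
      rintro t ⟨ht1, ht2⟩
      rcases lt_or_ge t 1 with hcase | hcase
      · rw [hψ₂ t (lt_of_lt_of_le hA ht1) hcase]
        exact le_max_left _ _
      · have h := hup 1 t le_rfl hcase
        rw [hψ1val, div_one] at h
        have : c₁ * t * α 1 ≤ c₁ * B * α 1 := by nlinarith [mul_pos hc₁ hα1]
        exact le_trans (le_trans h this) (le_max_right _ _)
    · intro r hr
      refine ⟨max (α 1)⁻¹ (c₀ * α 1)⁻¹, ?_⟩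
      intro t htr
      rcases lt_or_ge t 1 with hcase | hcase
      · rw [hψ₂ t (lt_of_lt_of_le hr htr) hcase]
        exact le_max_left _ _
      · have h := hlo 1 t le_rfl hcase
        rw [hψ1val] at h
        have hpos' : 0 < c₀ * α 1 := by positivity
        have : (ψ t)⁻¹ ≤ (c₀ * α 1)⁻¹ := inv_anti₀ hpos' h
        exact le_trans this (le_max_right _ _)
  refine ⟨parta, 1, le_rfl, ?_⟩
  -- Part (b)
  set K : ℝ := max c₀⁻¹ c₁ with hK
  have hK0 : 0 < K := lt_of_lt_of_le hc₁ (le_max_right _ _)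
  set C : ℝ := max 1 (2 * K) with hC
  have hC1 : (1:ℝ) ≤ C := le_max_left _ _
  have hC0 : (0:ℝ) < C := lt_of_lt_of_le one_pos hC1
  set SF : ℝ → Set ℝ :=
    fun t => {y | ∃ p q : ℝ, (∀ u : ℝ, 1 ≤ u → ψ u ≤ p + q * u) ∧ y = p + q * t} with hSF
  set ψ' : ℝ → ℝ := fun t => sInf (SF t) with hψ'
  -- a universal affine majorant
  have hmaj0 : ∀ u : ℝ, 1 ≤ u → ψ u ≤ c₁ * α 1 + c₁ * α 1 * u := by
    intro u hu
    have h := hup 1 u le_rfl hu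
    rw [hψ1val, div_one] at h
    nlinarith
  have hne : ∀ t : ℝ, (SF t).Nonempty :=
    fun t => ⟨c₁ * α 1 + c₁ * α 1 * t, c₁ * α 1, c₁ * α 1, hmaj0, rfl⟩
  have hlb : ∀ t : ℝ, 1 ≤ t → ∀ y ∈ SF t, ψ t ≤ y := by
    rintro t ht y ⟨p, q, hm, rfl⟩
    exact hm t ht
  have hbdd : ∀ t : ℝ, 1 ≤ t → BddBelow (SF t) := fun t ht => ⟨ψ t, hlb t ht⟩
  have hge : ∀ t : ℝ, 1 ≤ t → ψ t ≤ ψ' t := fun t ht => le_csInf (hne t) (hlb t ht)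
  have hpos'' : ∀ t ≥ (1:ℝ), 0 < ψ' t := fun t ht => lt_of_lt_of_le (hψpos t ht) (hge t ht)
  have hub : ∀ t : ℝ, 1 ≤ t → ψ' t ≤ 2 * K * ψ t := by
    intro t ht
    have ht0 : (0:ℝ) < t := lt_of_lt_of_le one_pos ht
    have hψt := hψpos t ht
    have hmem : (K * ψ t + K * ψ t / t * t) ∈ SF t := by
      refine ⟨K * ψ t, K * ψ t / t, ?_, rfl⟩
      intro u hu
      have hu0 : (0:ℝ) < u := lt_of_lt_of_le one_pos hu
      rcases le_total u t with hcase | hcase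
      · have h := hlo u t hu hcase
        have h1 : ψ u ≤ c₀⁻¹ * ψ t := by
          have h' := mul_le_mul_of_nonneg_left h (inv_nonneg.mpr hc₀.le)
          rwa [inv_mul_cancel_left₀ (ne_of_gt hc₀)] at h'
        have h2 : c₀⁻¹ * ψ t ≤ K * ψ t := mul_le_mul_of_nonneg_right (le_max_left _ _) hψt.le
        have h3 : 0 ≤ K * ψ t / t * u := by positivity
        linarith
      · have h := hup t u ht hcase
        have h2 : c₁ ≤ K := le_max_right _ _
        have h4 : c₁ * (u / t) * ψ t ≤ K * ψ t / t * u := by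
          rw [show c₁ * (u / t) * ψ t = c₁ * ψ t * u / t by ring,
              show K * ψ t / t * u = K * ψ t * u / t by ring]
          apply div_le_div_of_nonneg_right ?_ ht0.le
          have := mul_le_mul_of_nonneg_right h2 hψt.le
          exact mul_le_mul_of_nonneg_right this hu0.le
        have h5 : 0 ≤ K * ψ t := by positivity
        linarith
    have := csInf_le (hbdd t ht) hmem
    rw [div_mul_cancel₀ _ (ne_of_gt ht0)] at this
    linarith
  have hconc : ConcaveOn ℝ (Set.Ici (1:ℝ)) ψ' := by
    constructor
    · exact convex_Ici 1
    · intro x hx y hy a' b' ha' hb' hab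
      simp only [Set.mem_Ici] at hx hy
      simp only [smul_eq_mul]
      have hxy : (1:ℝ) ≤ a' * x + b' * y := by nlinarith
      apply le_csInf (hne _)
      rintro z ⟨p, q, hm, rfl⟩
      have h1 : ψ' x ≤ p + q * x := csInf_le (hbdd x hx) ⟨p, q, hm, rfl⟩
      have h2 : ψ' y ≤ p + q * y := csInf_le (hbdd y hy) ⟨p, q, hm, rfl⟩
      have heq : p + q * (a' * x + b' * y) = a' * (p + q * x) + b' * (p + q * y) := by
        linear_combination (-p) * hab
      rw [heq]
      exact add_le_add (mul_le_mul_of_nonneg_left h1 ha') (mul_le_mul_of_nonneg_left h2 hb')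
  refine ⟨C, hC1, ψ', hpos'', hconc, ?_⟩
  intro t ht
  have hψt := hψpos t ht
  have hψ't := hpos'' t ht
  have hCub : ψ' t ≤ C * ψ t := by
    have h2K : 2 * K * ψ t ≤ C * ψ t := mul_le_mul_of_nonneg_right (le_max_right _ _) hψt.le
    have := hub t ht
    linarith
  constructor
  · have h1 : C⁻¹ * ψ' t ≤ C⁻¹ * (C * ψ t) :=
      mul_le_mul_of_nonneg_left hCub (inv_nonneg.mpr hC0.le)
    rwa [inv_mul_cancel_left₀ (ne_of_gt hC0)] at h1
  · exact le_trans (hge t ht) (le_mul_of_one_le_left hψ't.le hC1)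
end

section
/- Let n ≥ 2 and q ≥ 1 be integers, and let A : ℂⁿ × ℂ → ℂ be the polynomial function A(ζ, λ) = Σ_{r=0}^{2q} λ^{2q−r} Σ_{|μ|=r} a_{r,μ} ζ^{μ}, where the a_{r,μ} are complex coefficients (so A is homogeneous of degree 2q in the variables (ζ, λ)). Let θ₁ ≤ θ₂ be real numbers and K := { r·e^{iθ} : r ∈ [0,∞), θ ∈ [θ₁, θ₂] } ⊆ ℂ a closed angle with vertex at the origin. Assume A(ξ, λ) ≠ 0 for every ξ ∈ ℝⁿ and every λ ∈ K with |ξ| + |λ| ≠ 0. Then for every ξ ∈ ℝⁿ, every unit vector ν ∈ ℝⁿ orthogonal to ξ, and every λ ∈ K with |ξ| + |λ| ≠ 0, the one-variable polynomial p(τ) := A(ξ + τν, λ) in τ ∈ ℂ has degree exactly 2q, has no real roots, and has exactly q roots (counted with multiplicity) with Im τ > 0 and exactly q roots (counted with multiplicity) with Im τ < 0. -/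
open Complex Polynomial Filter Topology NNReal

/-- The principal symbol `A(ζ, λ) = Σ_{r=0}^{2q} λ^{2q−r} Σ_{|μ|=r} a_{r,μ} ζ^μ`,
a homogeneous polynomial of degree `2q` in `(ζ, λ) ∈ ℂⁿ × ℂ`. -/
noncomputable def principalSymbol (n q : ℕ) (a : ℕ → (Fin n → ℕ) → ℂ)
    (ζ : Fin n → ℂ) (lam : ℂ) : ℂ :=
  ∑ r ∈ Finset.range (2 * q + 1), lam ^ (2 * q - r) *
    ∑ μ ∈ Finset.Nat.antidiagonalTuple n r, a r μ * ∏ i, ζ i ^ μ i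

/-- The closed angle `K := { r·e^{iθ} : r ≥ 0, θ ∈ [θ₁, θ₂] }` with vertex at the
origin. -/
def closedAngle (θ₁ θ₂ : ℝ) : Set ℂ :=
  {z : ℂ | ∃ r : ℝ, 0 ≤ r ∧ ∃ θ : ℝ, θ₁ ≤ θ ∧ θ ≤ θ₂ ∧ z = r * Complex.exp (θ * Complex.I)}

namespace St13

/-- count of roots in upper/lower half plane -/
noncomputable def cnt (P : Polynomial ℂ) : ℕ × ℕ :=
  (Multiset.card (P.roots.filter fun z => 0 < z.im),
   Multiset.card (P.roots.filter fun z => z.im < 0))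

lemma card_roots_eq (P : Polynomial ℂ) : Multiset.card P.roots = P.natDegree :=
  Polynomial.splits_iff_card_roots.mp (IsAlgClosed.splits P)

lemma card_filter_eq_of_rel {P Q : ℂ → Prop} [DecidablePred P] [DecidablePred Q]
    {s t : Multiset ℂ} (h : Multiset.Rel (fun a b => P a ↔ Q b) s t) :
    Multiset.card (s.filter P) = Multiset.card (t.filter Q) := by
  induction h with
  | zero => rfl
  | @cons a b as bs hab _ ih =>
      rw [Multiset.filter_cons, Multiset.filter_cons, Multiset.card_add, Multiset.card_add, ih]
      by_cases hP : P a
      · simp [hP, hab.mp hP]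
      · simp [hP, show ¬ Q b from fun h => hP (hab.mpr h)]

set_option maxHeartbeats 1000000 in
lemma roots_tendsto_subseq : ∀ (d : ℕ) (p : ℕ → Polynomial ℂ) (q : Polynomial ℂ),
    (∀ k, (p k).natDegree = d) → (∀ k, p k ≠ 0) → q.natDegree = d → q ≠ 0 →
    (∀ j, Tendsto (fun k => (p k).coeff j) atTop (𝓝 (q.coeff j))) →
    ∃ φ : ℕ → ℕ, StrictMono φ ∧ ∀ ε > 0, ∀ᶠ k in atTop,
      Multiset.Rel (fun a b => dist a b < ε) (p (φ k)).roots q.roots := by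
  intro d
  induction d with
  | zero =>
      intro p q hpd hp0 hqd hq0 hc
      refine ⟨id, strictMono_id, fun ε hε => Eventually.of_forall fun k => ?_⟩
      have h1 : (p k).roots = 0 := Multiset.card_eq_zero.mp (by rw [card_roots_eq, hpd])
      have h2 : q.roots = 0 := Multiset.card_eq_zero.mp (by rw [card_roots_eq, hqd])
      simp only [id]
      rw [h1, h2]
      exact Multiset.Rel.zero
  | succ d ih =>
      intro p q hpd hp0 hqd hq0 hc
      -- pick a root of each p k
      have hex : ∀ k, ∃ z, z ∈ (p k).roots := by
        intro k
        apply Multiset.card_pos_iff_exists_mem.mp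
        rw [card_roots_eq, hpd]; omega
      choose z hz using hex
      -- leading coefficients
      have hqlead : q.coeff (d + 1) ≠ 0 := by
        have := Polynomial.leadingCoeff_ne_zero.mpr hq0
        rwa [Polynomial.leadingCoeff, hqd] at this
      set L : ℝ≥0 := ‖q.coeff (d + 1)‖₊ with hL
      have hLpos : 0 < L := by simpa [hL] using hqlead
      have hlead : Tendsto (fun k => ‖(p k).coeff (d + 1)‖₊) atTop (𝓝 L) := (hc (d + 1)).nnnorm
      have hev1 : ∀ᶠ k in atTop, L / 2 < ‖(p k).coeff (d + 1)‖₊ :=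
        hlead.eventually (eventually_gt_nhds (NNReal.half_lt_self hLpos.ne'))
      set Cb : ℝ≥0 := (Finset.range (d + 1)).sup (fun j => ‖q.coeff j‖₊ + 1) with hCb
      have hev2 : ∀ᶠ k in atTop, ∀ j ∈ Finset.range (d + 1), ‖(p k).coeff j‖₊ ≤ Cb := by
        rw [Filter.eventually_all_finset]
        intro j hj
        have h1 : ∀ᶠ x in 𝓝 (q.coeff j), ‖x‖₊ < ‖q.coeff j‖₊ + 1 := by
          have : Continuous fun x : ℂ => ‖x‖₊ := continuous_nnnorm
          exact (this.tendsto _).eventually (eventually_lt_nhds (lt_add_of_pos_right _ one_pos))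
        exact ((hc j).eventually h1).mono fun k hk =>
          le_trans hk.le (Finset.le_sup (f := fun j => ‖q.coeff j‖₊ + 1) hj)
      set M : ℝ≥0 := Cb / (L / 2) + 1 with hM
      have hbd : ∀ᶠ k in atTop, ‖z k‖ ≤ (M : ℝ) := by
        filter_upwards [hev1, hev2] with k h1 h2
        have hlt := Polynomial.IsRoot.norm_lt_cauchyBound (hp0 k)
          ((Polynomial.mem_roots'.mp (hz k)).2)
        have hcb : (p k).cauchyBound ≤ M := by
          rw [Polynomial.cauchyBound]
          have hlead2 : (p k).leadingCoeff = (p k).coeff (d + 1) := by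
            rw [Polynomial.leadingCoeff, hpd]
          rw [hlead2]
          have hsup : (Finset.range (p k).natDegree).sup (fun j => ‖(p k).coeff j‖₊) ≤ Cb :=
            Finset.sup_le fun j hj => h2 j (by rwa [hpd] at hj)
          have hdiv : (Finset.range (p k).natDegree).sup (fun j => ‖(p k).coeff j‖₊) /
              ‖(p k).coeff (d + 1)‖₊ ≤ Cb / (L / 2) :=
            div_le_div₀ (by positivity) hsup (by positivity) h1.le
          exact add_le_add_left hdiv 1
        have : ‖z k‖₊ ≤ M := le_trans hlt.le hcb
        exact_mod_cast this
      obtain ⟨K₀, hK₀⟩ := eventually_atTop.mp hbd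
      set pp : ℕ → Polynomial ℂ := fun k => p (k + K₀) with hpp
      set zz : ℕ → ℂ := fun k => z (k + K₀) with hzz
      have hzzb : ∀ k, zz k ∈ Metric.closedBall (0 : ℂ) (M : ℝ) := by
        intro k
        rw [Metric.mem_closedBall, dist_zero_right]
        exact hK₀ _ (Nat.le_add_left _ _)
      obtain ⟨w, -, φ₀, hφ₀, hconv⟩ :=
        tendsto_subseq_of_bounded Metric.isBounded_closedBall hzzb
      have htk : Tendsto (fun k => φ₀ k + K₀) atTop atTop :=
        tendsto_atTop_mono (fun k => Nat.le_add_right _ _) hφ₀.tendsto_atTop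
      -- w is a root of q
      have hqw : q.IsRoot w := by
        have heval : ∀ k, (pp (φ₀ k)).eval (zz (φ₀ k)) = 0 :=
          fun k => (Polynomial.mem_roots'.mp (hz _)).2
        have ht : Tendsto (fun k => (pp (φ₀ k)).eval (zz (φ₀ k))) atTop (𝓝 (q.eval w)) := by
          have hrw : ∀ k, (pp (φ₀ k)).eval (zz (φ₀ k)) =
              ∑ i ∈ Finset.range (d + 2), (pp (φ₀ k)).coeff i * (zz (φ₀ k)) ^ i := by
            intro k
            exact Polynomial.eval_eq_sum_range' (by rw [hpp]; rw [hpd]; omega) _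
          have hrwq : q.eval w = ∑ i ∈ Finset.range (d + 2), q.coeff i * w ^ i :=
            Polynomial.eval_eq_sum_range' (by omega) _
          simp only [hrw, hrwq]
          apply tendsto_finset_sum
          intro i _
          exact ((hc i).comp htk).mul (hconv.pow i)
        exact tendsto_nhds_unique (ht.congr' (Eventually.of_forall fun k => (heval k)))
          tendsto_const_nhds
      -- divide
      set g : ℕ → Polynomial ℂ := fun k => pp (φ₀ k) /ₘ (X - C (zz (φ₀ k))) with hgdef
      set G : Polynomial ℂ := q /ₘ (X - C w) with hGdef
      have hfac : ∀ k, (X - C (zz (φ₀ k))) * g k = pp (φ₀ k) := by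
        intro k
        exact Polynomial.mul_divByMonic_eq_iff_isRoot.mpr (Polynomial.mem_roots'.mp (hz _)).2
      have hfacq : (X - C w) * G = q := Polynomial.mul_divByMonic_eq_iff_isRoot.mpr hqw
      have hg0 : ∀ k, g k ≠ 0 := by
        intro k h
        apply hp0 (φ₀ k + K₀)
        have := hfac k
        rw [h, mul_zero] at this
        exact this.symm
      have hG0 : G ≠ 0 := by
        intro h
        apply hq0
        rw [← hfacq, h, mul_zero]
      have hgd : ∀ k, (g k).natDegree = d := by
        intro k
        rw [hgdef]
        rw [Polynomial.natDegree_divByMonic _ (monic_X_sub_C _), Polynomial.natDegree_X_sub_C]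
        simp only [hpp]
        rw [hpd]
        omega
      have hGd : G.natDegree = d := by
        rw [hGdef, Polynomial.natDegree_divByMonic _ (monic_X_sub_C _),
          Polynomial.natDegree_X_sub_C, hqd]
        omega
      have hgc : ∀ j, Tendsto (fun k => (g k).coeff j) atTop (𝓝 (G.coeff j)) := by
        intro j
        have hrw : ∀ k, (g k).coeff j =
            ∑ i ∈ Finset.Icc (j + 1) (d + 1), (zz (φ₀ k)) ^ (i - (j + 1)) * (pp (φ₀ k)).coeff i := by
          intro k
          rw [hgdef, Polynomial.coeff_divByMonic_X_sub_C]
          congr 1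
          simp only [hpp]; rw [hpd]
        have hrwG : G.coeff j = ∑ i ∈ Finset.Icc (j + 1) (d + 1), w ^ (i - (j + 1)) * q.coeff i := by
          rw [hGdef, Polynomial.coeff_divByMonic_X_sub_C, hqd]
        simp only [hrw, hrwG]
        apply tendsto_finset_sum
        intro i _
        exact (hconv.pow _).mul ((hc i).comp htk)
      obtain ⟨ψ, hψ, hrel⟩ := ih g G hgd hg0 hGd hG0 hgc
      refine ⟨fun k => φ₀ (ψ k) + K₀, fun a b hab => Nat.add_lt_add_right (hφ₀ (hψ hab)) K₀, ?_⟩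
      intro ε hε
      have h1 : ∀ᶠ k in atTop, dist (zz (φ₀ (ψ k))) w < ε := by
        have : Tendsto (fun k => zz (φ₀ (ψ k))) atTop (𝓝 w) := hconv.comp hψ.tendsto_atTop
        exact this.eventually (by
          have : Metric.ball w ε ∈ 𝓝 w := Metric.ball_mem_nhds w hε
          filter_upwards [this] with x hx using Metric.mem_ball.mp hx)
      filter_upwards [h1, hrel ε hε] with k hk1 hk2
      have hroots : (p (φ₀ (ψ k) + K₀)).roots = (zz (φ₀ (ψ k))) ::ₘ (g (ψ k)).roots := by
        have : p (φ₀ (ψ k) + K₀) = (X - C (zz (φ₀ (ψ k)))) * g (ψ k) := (hfac (ψ k)).symm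
        rw [this, Polynomial.roots_mul (by rw [← this]; exact hp0 _),
          Polynomial.roots_X_sub_C, Multiset.singleton_add]
      have hrootsq : q.roots = w ::ₘ G.roots := by
        conv_lhs => rw [← hfacq]
        rw [Polynomial.roots_mul (by rw [hfacq]; exact hq0),
          Polynomial.roots_X_sub_C, Multiset.singleton_add]
      rw [hroots, hrootsq]
      exact Multiset.Rel.cons hk1 hk2

lemma im_iff_of_close {a b : ℂ} {δ : ℝ} (hδ0 : 0 < δ) (hbδ : δ ≤ |b.im|)
    (hd : dist a b < δ) : (0 < a.im ↔ 0 < b.im) ∧ (a.im < 0 ↔ b.im < 0) := by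
  have him : |a.im - b.im| < δ := by
    calc |a.im - b.im| = |(a - b).im| := by rw [Complex.sub_im]
    _ ≤ ‖a - b‖ := Complex.abs_im_le_norm _
    _ = dist a b := (Complex.dist_eq a b).symm
    _ < δ := hd
  rw [abs_lt] at him
  rcases lt_trichotomy b.im 0 with h | h | h
  · have : δ ≤ -b.im := by rwa [abs_of_neg h] at hbδ
    exact ⟨iff_of_false (by linarith) (by linarith), iff_of_true (by linarith) h⟩
  · exfalso; rw [h, abs_zero] at hbδ; linarith
  · have : δ ≤ b.im := by rwa [abs_of_pos h] at hbδ
    exact ⟨iff_of_true (by linarith) h, iff_of_false (by linarith) (by linarith)⟩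

lemma cnt_frequently_eq (p : ℕ → Polynomial ℂ) (q : Polynomial ℂ) (d : ℕ)
    (hpd : ∀ k, (p k).natDegree = d) (hp0 : ∀ k, p k ≠ 0)
    (hqd : q.natDegree = d) (hq0 : q ≠ 0)
    (hqim : ∀ z ∈ q.roots, z.im ≠ 0)
    (hc : ∀ j, Tendsto (fun k => (p k).coeff j) atTop (𝓝 (q.coeff j))) :
    ∃ᶠ k in atTop, cnt (p k) = cnt q := by
  obtain ⟨δ, hδ0, hδ⟩ : ∃ δ > 0, ∀ z ∈ q.roots, δ ≤ |z.im| := by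
    rcases q.roots.toFinset.eq_empty_or_nonempty with h | h
    · exact ⟨1, one_pos, fun z hz =>
        absurd (Multiset.mem_toFinset.mpr hz) (by simp [h])⟩
    · have hne : (q.roots.toFinset.image fun z => |z.im|).Nonempty := h.image _
      refine ⟨(q.roots.toFinset.image fun z => |z.im|).min' hne, ?_, ?_⟩
      · rw [gt_iff_lt, Finset.lt_min'_iff]
        intro b hb
        obtain ⟨z, hz, rfl⟩ := Finset.mem_image.mp hb
        exact abs_pos.mpr (hqim z (Multiset.mem_toFinset.mp hz))
      · intro z hz
        exact Finset.min'_le _ _ (Finset.mem_image_of_mem _ (Multiset.mem_toFinset.mpr hz))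
  obtain ⟨φ, hφ, hrel⟩ := roots_tendsto_subseq d p q hpd hp0 hqd hq0 hc
  have key : ∀ᶠ k in atTop, cnt (p (φ k)) = cnt q := by
    filter_upwards [hrel δ hδ0] with k hk
    have hiff : Multiset.Rel (fun a b => (0 < a.im ↔ 0 < b.im) ∧ (a.im < 0 ↔ b.im < 0))
        (p (φ k)).roots q.roots := by
      refine hk.mono fun a _ b hb hd => im_iff_of_close hδ0 (hδ b hb) hd
    unfold cnt
    refine Prod.ext ?_ ?_
    · exact card_filter_eq_of_rel (hiff.mono fun a _ b _ h => h.1)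
    · exact card_filter_eq_of_rel (hiff.mono fun a _ b _ h => h.2)
  rw [frequently_atTop]
  intro N
  obtain ⟨K, hK⟩ := eventually_atTop.mp key
  exact ⟨φ (max N K), le_trans (le_max_left _ _) (hφ.le_apply),
    hK _ (le_max_right _ _)⟩

lemma cnt_const (F : ℝ → Polynomial ℂ) (d : ℕ)
    (hF : ∀ j, Continuous fun t => (F t).coeff j)
    (hdeg : ∀ t ∈ Set.Icc (0:ℝ) 1, (F t).natDegree = d)
    (h0 : ∀ t ∈ Set.Icc (0:ℝ) 1, F t ≠ 0)
    (him : ∀ t ∈ Set.Icc (0:ℝ) 1, ∀ z ∈ (F t).roots, z.im ≠ 0) :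
    cnt (F 0) = cnt (F 1) := by
  haveI : PreconnectedSpace (Set.Icc (0:ℝ) 1) :=
    Subtype.preconnectedSpace (isPreconnected_Icc (a := (0:ℝ)) (b := 1))
  set g : Set.Icc (0:ℝ) 1 → ℕ × ℕ := fun x => cnt (F x) with hg
  have hlc : IsLocallyConstant g := by
    rw [IsLocallyConstant.iff_exists_open]
    intro x
    have hev : ∀ᶠ y in 𝓝 x, g y = g x := by
      by_contra hcon
      rw [Filter.not_eventually] at hcon
      obtain ⟨u, hu, hune⟩ := exists_seq_forall_of_frequently hcon
      have hval : Tendsto (fun k => ((u k : Set.Icc (0:ℝ) 1) : ℝ)) atTop (𝓝 (x : ℝ)) :=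
        ((continuous_subtype_val.tendsto x).comp hu)
      have hfr := cnt_frequently_eq (fun k => F (u k)) (F x) d
        (fun k => hdeg _ (u k).2) (fun k => h0 _ (u k).2) (hdeg _ x.2) (h0 _ x.2)
        (him _ x.2) (fun j => ((hF j).tendsto _).comp hval)
      obtain ⟨k, hk⟩ := hfr.exists
      exact hune k hk
    obtain ⟨U, hUsub, hUo, hUx⟩ := mem_nhds_iff.mp hev
    exact ⟨U, hUo, hUx, fun y hy => hUsub hy⟩
  have := hlc.apply_eq_of_preconnectedSpace ⟨0, by norm_num⟩ ⟨1, by norm_num⟩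
  simpa [hg] using this

section CC

variable {α : Type*} [TopologicalSpace α]

/-- all coefficients continuous in the parameter -/
def CC (F : α → Polynomial ℂ) : Prop := ∀ j, Continuous fun s => (F s).coeff j

lemma CC.const (p : Polynomial ℂ) : CC (fun _ : α => p) := fun _ => continuous_const

lemma CC.C {c : α → ℂ} (h : Continuous c) : CC (fun x => Polynomial.C (c x)) := by
  intro j
  simp only [Polynomial.coeff_C]
  by_cases hj : j = 0
  · simpa [hj] using h
  · simpa [hj] using continuous_const

lemma CC.add {f g : α → Polynomial ℂ} (hf : CC f) (hg : CC g) :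
    CC (fun x => f x + g x) := fun j => by
  simp only [Polynomial.coeff_add]; exact (hf j).add (hg j)

lemma CC.mul {f g : α → Polynomial ℂ} (hf : CC f) (hg : CC g) :
    CC (fun x => f x * g x) := fun j => by
  simp only [Polynomial.coeff_mul]
  exact continuous_finset_sum _ fun i _ => (hf i.1).mul (hg i.2)

lemma CC.pow {f : α → Polynomial ℂ} (hf : CC f) (m : ℕ) : CC (fun x => f x ^ m) := by
  induction m with
  | zero => simpa using CC.const 1
  | succ m ih => simp only [pow_succ]; exact ih.mul hf

lemma CC.sum {ι : Type*} (s : Finset ι) (f : ι → α → Polynomial ℂ)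
    (h : ∀ i ∈ s, CC (f i)) : CC (fun x => ∑ i ∈ s, f i x) := fun j => by
  simp only [Polynomial.finset_sum_coeff]
  exact continuous_finset_sum _ fun i hi => h i hi j

lemma CC.prod {ι : Type*} (s : Finset ι) (f : ι → α → Polynomial ℂ)
    (h : ∀ i ∈ s, CC (f i)) : CC (fun x => ∏ i ∈ s, f i x) := by
  induction s using Finset.cons_induction with
  | empty => simpa using CC.const 1
  | cons a s ha ih =>
      simp only [Finset.prod_cons]
      exact (h a (Finset.mem_cons_self a s)).mul
        (ih fun i hi => h i (Finset.mem_cons_of_mem hi))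

end CC

section SymPoly

variable (n q : ℕ) (a : ℕ → (Fin n → ℕ) → ℂ)

/-- the symbol `A(ξ + τν, λ)` as a polynomial in `τ` -/
noncomputable def symPoly (ξ ν : Fin n → ℝ) (lam : ℂ) : Polynomial ℂ :=
  ∑ r ∈ Finset.range (2 * q + 1), Polynomial.C (lam ^ (2 * q - r)) *
    ∑ μ ∈ Finset.Nat.antidiagonalTuple n r, Polynomial.C (a r μ) *
      ∏ i, (Polynomial.C ((ξ i : ℂ)) + X * Polynomial.C ((ν i : ℂ))) ^ μ i

lemma symPoly_eval (ξ ν : Fin n → ℝ) (lam : ℂ) (τ : ℂ) :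
    (symPoly n q a ξ ν lam).eval τ
      = principalSymbol n q a (fun i => (ξ i : ℂ) + τ * (ν i : ℂ)) lam := by
  unfold symPoly principalSymbol
  simp [Polynomial.eval_finset_sum, Polynomial.eval_prod]
  refine Finset.sum_congr rfl fun r _ => ?_
  congr 1
  refine Finset.sum_congr rfl fun μ _ => ?_
  congr 1
  refine Finset.prod_congr rfl fun i _ => ?_
  rw [mul_comm]

lemma symPoly_cc : CC (fun p : (Fin n → ℝ) × (Fin n → ℝ) × ℂ =>
    symPoly n q a p.1 p.2.1 p.2.2) := by
  apply CC.sum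
  intro r _
  apply CC.mul
  · exact CC.C ((continuous_snd.comp continuous_snd).pow _)
  · apply CC.sum
    intro μ _
    apply CC.mul
    · exact CC.const _
    · apply CC.prod
      intro i _
      apply CC.pow
      apply CC.add
      · exact CC.C (Complex.continuous_ofReal.comp
          ((continuous_apply i).comp continuous_fst))
      · exact (CC.const X).mul (CC.C (Complex.continuous_ofReal.comp
          ((continuous_apply i).comp (continuous_fst.comp continuous_snd))))

lemma natDegree_lin (x y : ℂ) : (Polynomial.C x + X * Polynomial.C y).natDegree ≤ 1 := by
  apply le_trans (Polynomial.natDegree_add_le _ _)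
  simp only [Polynomial.natDegree_C]
  refine max_le (by omega) (le_trans (Polynomial.natDegree_mul_le) ?_)
  simp [Polynomial.natDegree_X]

lemma coeff_prod_top {ι : Type*} (s : Finset ι) (f : ι → Polynomial ℂ) (dd : ι → ℕ)
    (h : ∀ i ∈ s, (f i).natDegree ≤ dd i) :
    (∏ i ∈ s, f i).coeff (∑ i ∈ s, dd i) = ∏ i ∈ s, (f i).coeff (dd i) := by
  induction s using Finset.cons_induction with
  | empty => simp
  | cons b s hb ih =>
      rw [Finset.prod_cons, Finset.sum_cons,
        Polynomial.coeff_mul_add_eq_of_natDegree_le (h b (Finset.mem_cons_self b s))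
          (le_trans (Polynomial.natDegree_prod_le _ _)
            (Finset.sum_le_sum fun i hi => h i (Finset.mem_cons_of_mem hi))),
        ih fun i hi => h i (Finset.mem_cons_of_mem hi), Finset.prod_cons]

lemma coeff_pow_top (g : Polynomial ℂ) (h : g.natDegree ≤ 1) (m : ℕ) :
    (g ^ m).coeff m = (g.coeff 1) ^ m := by
  have := coeff_prod_top (Finset.range m) (fun _ => g) (fun _ => 1) (fun i _ => h)
  simpa using this

lemma natDegree_linpow_le (x y : ℂ) (m : ℕ) :
    ((Polynomial.C x + X * Polynomial.C y) ^ m).natDegree ≤ m := by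
  refine le_trans Polynomial.natDegree_pow_le ?_
  calc m * (Polynomial.C x + X * Polynomial.C y).natDegree ≤ m * 1 :=
        Nat.mul_le_mul_left m (natDegree_lin x y)
    _ = m := by omega

lemma natDegree_inner_le (ξ ν : Fin n → ℝ) (r : ℕ) :
    (∑ μ ∈ Finset.Nat.antidiagonalTuple n r, Polynomial.C (a r μ) *
      ∏ i, (Polynomial.C ((ξ i : ℂ)) + X * Polynomial.C ((ν i : ℂ))) ^ μ i).natDegree ≤ r := by
  apply Polynomial.natDegree_sum_le_of_forall_le
  intro μ hμ
  refine le_trans Polynomial.natDegree_mul_le ?_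
  rw [Polynomial.natDegree_C, zero_add]
  refine le_trans (Polynomial.natDegree_prod_le _ _) ?_
  rw [← Finset.Nat.mem_antidiagonalTuple.mp hμ]
  exact Finset.sum_le_sum fun i _ => natDegree_linpow_le _ _ _

lemma symPoly_natDegree_le (ξ ν : Fin n → ℝ) (lam : ℂ) :
    (symPoly n q a ξ ν lam).natDegree ≤ 2 * q := by
  apply Polynomial.natDegree_sum_le_of_forall_le
  intro r hr
  refine le_trans Polynomial.natDegree_mul_le ?_
  rw [Polynomial.natDegree_C, zero_add]
  refine le_trans (natDegree_inner_le n a ξ ν r) ?_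
  have := Finset.mem_range.mp hr
  omega

lemma symPoly_coeff_top (ξ ν : Fin n → ℝ) (lam : ℂ) :
    (symPoly n q a ξ ν lam).coeff (2 * q) =
      ∑ μ ∈ Finset.Nat.antidiagonalTuple n (2 * q), a (2 * q) μ * ∏ i, (ν i : ℂ) ^ μ i := by
  unfold symPoly
  rw [Polynomial.finset_sum_coeff, Finset.sum_eq_single (2 * q)]
  · rw [Nat.sub_self, pow_zero, map_one, one_mul, Polynomial.finset_sum_coeff]
    apply Finset.sum_congr rfl
    intro μ hμ
    rw [Polynomial.coeff_C_mul]
    congr 1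
    have hsum := Finset.Nat.mem_antidiagonalTuple.mp hμ
    conv_lhs => rw [← hsum]
    rw [coeff_prod_top _ _ _ (fun i _ => natDegree_linpow_le _ _ _)]
    apply Finset.prod_congr rfl
    intro i _
    rw [coeff_pow_top _ (natDegree_lin _ _)]
    congr 1
    simp
  · intro r hr hr'
    apply Polynomial.coeff_eq_zero_of_natDegree_lt
    have h1 : r < 2 * q := by
      have := Finset.mem_range.mp hr
      omega
    refine lt_of_le_of_lt (le_trans Polynomial.natDegree_mul_le ?_) h1
    rw [Polynomial.natDegree_C, zero_add]
    exact natDegree_inner_le n a ξ ν r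
  · intro h
    exact absurd (Finset.self_mem_range_succ _) h

end SymPoly

lemma roots_comp_neg (P : Polynomial ℂ) :
    (P.comp (-X)).roots = P.roots.map (fun z => -z) := by
  rcases eq_or_ne P 0 with h | h
  · simp [h]
  · have hs : P = Polynomial.C P.leadingCoeff *
        (P.roots.map fun a => X - Polynomial.C a).prod :=
      (IsAlgClosed.splits P).eq_prod_roots
    have step : P.comp (-X) =
        Polynomial.C (P.leadingCoeff * (-1) ^ Multiset.card P.roots) *
        (Multiset.map (fun b => X - Polynomial.C b) (P.roots.map fun z => -z)).prod := by
      conv_lhs => rw [hs]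
      rw [Polynomial.mul_comp, Polynomial.C_comp, Polynomial.multiset_prod_comp,
        Multiset.map_map]
      have hcomp : ∀ a : ℂ, ((X - Polynomial.C a).comp (-X)) =
          (-1 : Polynomial ℂ) * (X - Polynomial.C (-a)) := by
        intro a
        simp only [Polynomial.sub_comp, Polynomial.C_comp, Polynomial.X_comp, map_neg]
        ring
      simp only [Function.comp_def]
      rw [Multiset.map_congr rfl (fun a _ => hcomp a)]
      rw [show (fun a : ℂ => (-1 : Polynomial ℂ) * (X - Polynomial.C (-a)))
          = (fun a : ℂ => (-1 : Polynomial ℂ) * (X - Polynomial.C a)) ∘ (fun z : ℂ => -z)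
          from rfl]
      rw [← Multiset.map_map, Multiset.prod_map_mul, Multiset.map_const',
        Multiset.prod_replicate, Multiset.card_map]
      rw [← mul_assoc]
      congr 1
      rw [map_mul, map_pow, map_neg, map_one]
    rw [step, Polynomial.roots_C_mul _
      (mul_ne_zero (Polynomial.leadingCoeff_ne_zero.mpr h)
        (pow_ne_zero _ (neg_ne_zero.mpr one_ne_zero))),
      Polynomial.roots_multiset_prod_X_sub_C]

lemma cnt_neg (P : Polynomial ℂ) : cnt (P.comp (-X)) = ((cnt P).2, (cnt P).1) := by
  unfold cnt
  rw [roots_comp_neg]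
  have hcf : ∀ (p q : ℂ → Prop) (_ : DecidablePred p) (_ : DecidablePred q),
      (∀ z : ℂ, p (-z) ↔ q z) →
      Multiset.card (Multiset.filter p (P.roots.map fun z => -z))
        = Multiset.card (P.roots.filter q) := by
    intro p q hp hq hpq
    rw [← Multiset.countP_eq_card_filter, Multiset.countP_map]
    rw [Multiset.filter_congr (fun z _ => hpq z)]
  exact Prod.ext (hcf _ _ _ _ (fun z => by simp [neg_pos]))
    (hcf _ _ _ _ (fun z => by simp [neg_lt_zero]))

lemma cnt_add (P : Polynomial ℂ) (him : ∀ z ∈ P.roots, z.im ≠ 0) :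
    (cnt P).1 + (cnt P).2 = P.natDegree := by
  unfold cnt
  have h := Multiset.filter_add_filter (fun z : ℂ => 0 < z.im) (fun z : ℂ => z.im < 0) P.roots
  have hself : Multiset.filter (fun z : ℂ => 0 < z.im ∨ z.im < 0) P.roots = P.roots :=
    Multiset.filter_eq_self.mpr (fun z hz => ((him z hz).lt_or_gt).symm)
  have hnil : Multiset.filter (fun z : ℂ => 0 < z.im ∧ z.im < 0) P.roots = 0 :=
    Multiset.filter_eq_nil.mpr (fun z _ hcon => by
      have := hcon.1
      have := hcon.2
      linarith)
  rw [hself, hnil] at h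
  have h2 := congrArg Multiset.card h
  rw [Multiset.card_add, Multiset.card_add, Multiset.card_zero, add_zero, card_roots_eq] at h2
  exact h2

lemma exists_ortho (n : ℕ) (hn : 2 ≤ n) (ν : Fin n → ℝ) (hν : ∑ i, ν i ^ 2 = 1) :
    ∃ ν' : Fin n → ℝ, (∑ i, ν' i ^ 2) = 1 ∧ (∑ i, ν i * ν' i) = 0 := by
  have hj : ∃ j, ν j ≠ 0 := by
    by_contra h
    push_neg at h
    have : (1 : ℝ) = 0 := by rw [← hν]; simp [h]
    exact one_ne_zero this
  obtain ⟨j, hjne⟩ := hj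
  have hkex : ∃ k, k ≠ j := by
    let j0 : Fin n := ⟨0, by omega⟩
    let j1 : Fin n := ⟨1, by omega⟩
    have hj01 : j0 ≠ j1 := by simp [j0, j1, Fin.ext_iff]
    by_cases hc : j = j0
    · exact ⟨j1, by rw [hc]; exact hj01.symm⟩
    · exact ⟨j0, fun hc2 => hc hc2.symm⟩
  obtain ⟨k, hk⟩ := hkex
  have hq2 : 0 < ν j ^ 2 + ν k ^ 2 := by
    have h1 : 0 < ν j ^ 2 := lt_of_le_of_ne (sq_nonneg _) (Ne.symm (pow_ne_zero 2 hjne))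
    nlinarith [sq_nonneg (ν k)]
  set s : ℝ := Real.sqrt (ν j ^ 2 + ν k ^ 2) with hs
  have hspos : 0 < s := Real.sqrt_pos.mpr hq2
  have hs2 : s ^ 2 = ν j ^ 2 + ν k ^ 2 := Real.sq_sqrt hq2.le
  set w : Fin n → ℝ := fun i => if i = j then ν k else if i = k then -ν j else 0 with hw
  have key : ∀ (f : Fin n → ℝ), (∀ i, i ≠ j → i ≠ k → f i = 0) → (∑ i, f i) = f j + f k := by
    intro f hf
    have hsub := Finset.sum_subset (Finset.subset_univ ({j, k} : Finset (Fin n)))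
      (fun x _ hx => by
        simp only [Finset.mem_insert, Finset.mem_singleton] at hx
        push_neg at hx
        exact hf x hx.1 hx.2)
    rw [← hsub, Finset.sum_insert (Finset.notMem_singleton.mpr (Ne.symm hk)),
      Finset.sum_singleton]
  refine ⟨fun i => w i / s, ?_, ?_⟩
  · rw [key (fun i => (w i / s) ^ 2) (fun i hij hik => by simp [hw, hij, hik])]
    simp [hw, hk]
    field_simp
    linarith [hs2]
  · rw [key (fun i => ν i * (w i / s)) (fun i hij hik => by simp [hw, hij, hik])]
    simp [hw, hk]
    ring

section Hell

variable {n q : ℕ} {a : ℕ → (Fin n → ℕ) → ℂ} {θ₁ θ₂ : ℝ}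

lemma zero_mem_angle (hθ : θ₁ ≤ θ₂) : (0 : ℂ) ∈ closedAngle θ₁ θ₂ :=
  ⟨0, le_refl 0, θ₁, le_refl θ₁, hθ, by simp⟩

variable (hθ : θ₁ ≤ θ₂)
    (hell : ∀ ξ : Fin n → ℝ, ∀ lam ∈ closedAngle θ₁ θ₂,
      Real.sqrt (∑ i, ξ i ^ 2) + ‖lam‖ ≠ 0 →
      principalSymbol n q a (fun i => (ξ i : ℂ)) lam ≠ 0)

include hθ hell

lemma lead_ne (ν : Fin n → ℝ) (hν : (∑ i, ν i ^ 2) = 1) :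
    (∑ μ ∈ Finset.Nat.antidiagonalTuple n (2 * q), a (2 * q) μ * ∏ i, (ν i : ℂ) ^ μ i) ≠ 0 := by
  have h := hell ν 0 (zero_mem_angle hθ) (by rw [hν]; simp)
  unfold principalSymbol at h
  rwa [Finset.sum_eq_single (2 * q) ?h0 ?h1, Nat.sub_self, pow_zero, one_mul] at h
  case h0 =>
    intro r hr hne
    have h1 := Finset.mem_range.mp hr
    rw [zero_pow (by omega : 2 * q - r ≠ 0), zero_mul]
  case h1 =>
    intro h
    exact absurd (Finset.self_mem_range_succ _) h

lemma symPoly_deg (ξ ν : Fin n → ℝ) (lam : ℂ) (hν : (∑ i, ν i ^ 2) = 1) :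
    (symPoly n q a ξ ν lam).natDegree = 2 * q ∧ symPoly n q a ξ ν lam ≠ 0 := by
  have htop : (symPoly n q a ξ ν lam).coeff (2 * q) ≠ 0 := by
    rw [symPoly_coeff_top]
    exact lead_ne hθ hell ν hν
  constructor
  · exact le_antisymm (symPoly_natDegree_le n q a ξ ν lam)
      (Polynomial.le_natDegree_of_ne_zero htop)
  · intro h
    rw [h] at htop
    simp at htop

omit hθ in
lemma symPoly_no_real_root (ξ ν : Fin n → ℝ) (lam : ℂ)
    (hν : (∑ i, ν i ^ 2) = 1) (hξν : (∑ i, ξ i * ν i) = 0)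
    (hK : lam ∈ closedAngle θ₁ θ₂)
    (hne : Real.sqrt (∑ i, ξ i ^ 2) + ‖lam‖ ≠ 0) :
    ∀ x : ℝ, (symPoly n q a ξ ν lam).eval (x : ℂ) ≠ 0 := by
  intro x
  rw [symPoly_eval]
  have hcast : (fun i => ((ξ i + x * ν i : ℝ) : ℂ))
      = fun i => (ξ i : ℂ) + (x : ℂ) * (ν i : ℂ) := by
    funext i
    push_cast
    ring
  have hsum : (∑ i, (ξ i + x * ν i) ^ 2) = (∑ i, ξ i ^ 2) + x ^ 2 := by
    have h1 : ∀ i ∈ Finset.univ, (ξ i + x * ν i) ^ 2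
        = ξ i ^ 2 + (2 * x) * (ξ i * ν i) + x ^ 2 * ν i ^ 2 := fun i _ => by ring
    rw [Finset.sum_congr rfl h1, Finset.sum_add_distrib, Finset.sum_add_distrib,
      ← Finset.mul_sum, ← Finset.mul_sum, hξν, hν]
    ring
  have hne2 : Real.sqrt (∑ i, (ξ i + x * ν i) ^ 2) + ‖lam‖ ≠ 0 := by
    intro h0
    have h3 := (add_eq_zero_iff_of_nonneg (Real.sqrt_nonneg _)
      (norm_nonneg _)).mp h0
    have h5 : (0:ℝ) ≤ ∑ i, (ξ i + x * ν i) ^ 2 :=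
      Finset.sum_nonneg fun i _ => sq_nonneg _
    have h4 : (∑ i, (ξ i + x * ν i) ^ 2) = 0 := by
      rw [← Real.sq_sqrt h5, h3.1]
      ring
    rw [hsum] at h4
    have h6 : (∑ i, ξ i ^ 2) = 0 := by
      have h7 : (0:ℝ) ≤ ∑ i, ξ i ^ 2 := Finset.sum_nonneg fun i _ => sq_nonneg _
      nlinarith [sq_nonneg x]
    apply hne
    rw [h6, Real.sqrt_zero, h3.2]
    ring
  have := hell (fun i => ξ i + x * ν i) lam hK hne2
  rwa [hcast] at this

omit hθ hell in
lemma roots_im_ne {P : Polynomial ℂ} (h : ∀ x : ℝ, P.eval (x : ℂ) ≠ 0) :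
    ∀ z ∈ P.roots, z.im ≠ 0 := by
  intro z hz h0
  have hz2 := (Polynomial.mem_roots'.mp hz).2
  have hz3 : z = ((z.re : ℝ) : ℂ) := Complex.ext (by simp) (by simp [h0])
  exact h z.re (by rw [← hz3]; exact hz2)

lemma path_cnt (Φ : ℝ → (Fin n → ℝ) × (Fin n → ℝ) × ℂ) (hΦ : Continuous Φ)
    (hcond : ∀ t ∈ Set.Icc (0:ℝ) 1,
      (∑ i, (Φ t).2.1 i ^ 2) = 1 ∧ (∑ i, (Φ t).1 i * (Φ t).2.1 i) = 0 ∧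
      (Φ t).2.2 ∈ closedAngle θ₁ θ₂ ∧
      Real.sqrt (∑ i, (Φ t).1 i ^ 2) + ‖(Φ t).2.2‖ ≠ 0) :
    cnt (symPoly n q a (Φ 0).1 (Φ 0).2.1 (Φ 0).2.2)
      = cnt (symPoly n q a (Φ 1).1 (Φ 1).2.1 (Φ 1).2.2) :=
  cnt_const (fun t => symPoly n q a (Φ t).1 (Φ t).2.1 (Φ t).2.2) (2 * q)
    (fun j => ((symPoly_cc n q a) j).comp hΦ)
    (fun t ht => (symPoly_deg hθ hell _ _ _ (hcond t ht).1).1)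
    (fun t ht => (symPoly_deg hθ hell _ _ _ (hcond t ht).1).2)
    (fun t ht => roots_im_ne (symPoly_no_real_root hell _ _ _
      (hcond t ht).1 (hcond t ht).2.1 (hcond t ht).2.2.1 (hcond t ht).2.2.2))

end Hell

end St13

open St13

/-- Let `A(ζ,λ)` be as above (`n ≥ 2`, `q ≥ 1`) and assume Condition (i)
of parameter-ellipticity in the closed angle `K`: `A(ξ,λ) ≠ 0` for all `ξ ∈ ℝⁿ`, `λ ∈ K`
with `|ξ| + |λ| ≠ 0`. Then for every `ξ ∈ ℝⁿ`, every unit vector `ν ∈ ℝⁿ` orthogonal to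
`ξ`, and every `λ ∈ K` with `|ξ| + |λ| ≠ 0`, the polynomial `p(τ) := A(ξ + τν, λ)` in
`τ ∈ ℂ` has degree exactly `2q`, has no real roots, and has exactly `q` roots with
`Im τ > 0` and exactly `q` roots with `Im τ < 0` (counted with multiplicity). -/
theorem statement13 (n q : ℕ) (hn : 2 ≤ n) (hq : 1 ≤ q) (a : ℕ → (Fin n → ℕ) → ℂ)
    (θ₁ θ₂ : ℝ) (hθ : θ₁ ≤ θ₂)
    (hell : ∀ ξ : Fin n → ℝ, ∀ lam ∈ closedAngle θ₁ θ₂,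
      Real.sqrt (∑ i, ξ i ^ 2) + ‖lam‖ ≠ 0 →
      principalSymbol n q a (fun i => (ξ i : ℂ)) lam ≠ 0) :
    ∀ ξ ν : Fin n → ℝ, (∑ i, ν i ^ 2) = 1 → (∑ i, ξ i * ν i) = 0 →
      ∀ lam ∈ closedAngle θ₁ θ₂, Real.sqrt (∑ i, ξ i ^ 2) + ‖lam‖ ≠ 0 →
      ∀ P : Polynomial ℂ,
        (∀ τ : ℂ, P.eval τ = principalSymbol n q a (fun i => (ξ i : ℂ) + τ * (ν i : ℂ)) lam) →
        P.degree = (2 * q : ℕ) ∧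
        (∀ x : ℝ, P.eval (x : ℂ) ≠ 0) ∧
        Multiset.card (P.roots.filter fun z => 0 < z.im) = q ∧
        Multiset.card (P.roots.filter fun z => z.im < 0) = q := by
  intro ξ ν hν hξν lam hlam hne P hP
  obtain ⟨r, hr, θ, hθa, hθb, hlameq⟩ := id hlam
  set e : ℂ := Complex.exp (θ * Complex.I) with he
  have habs_e : ‖e‖ = 1 := Complex.norm_exp_ofReal_mul_I θ
  have hOK : ∀ c : ℝ, 0 ≤ c → ((c : ℂ) * e) ∈ closedAngle θ₁ θ₂ :=
    fun c hc => ⟨c, hc, θ, hθa, hθb, rfl⟩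
  have heK : e ∈ closedAngle θ₁ θ₂ := by
    have := hOK 1 zero_le_one
    simpa using this
  have habs_ce : ∀ c : ℝ, 0 ≤ c → ‖(c : ℂ) * e‖ = c := by
    intro c hc
    rw [norm_mul, habs_e, mul_one]; exact Complex.norm_of_nonneg hc
  have hPsym : P = symPoly n q a ξ ν lam :=
    Polynomial.funext fun τ => by rw [hP, symPoly_eval]
  -- congruence helper
  have hcg : ∀ {ξ₁ ξ₂ ν₁ ν₂ : Fin n → ℝ} {l₁ l₂ : ℂ}, ξ₁ = ξ₂ → ν₁ = ν₂ → l₁ = l₂ →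
      cnt (symPoly n q a ξ₁ ν₁ l₁) = cnt (symPoly n q a ξ₂ ν₂ l₂) := by
    rintro ξ₁ ξ₂ ν₁ ν₂ l₁ l₂ rfl rfl rfl
    rfl
  -- basic facts for (ξ, ν, lam)
  have hdeg0 := symPoly_deg hθ hell ξ ν lam hν
  have hnoreal := symPoly_no_real_root hell ξ ν lam hν hξν hlam hne
  have hP0 : P ≠ 0 := by rw [hPsym]; exact hdeg0.2
  refine ⟨?_, ?_, ?_⟩
  · rw [Polynomial.degree_eq_natDegree hP0, hPsym, hdeg0.1]
  · intro x
    rw [hPsym]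
    exact hnoreal x
  -- the root counting
  -- Path 1 : deform lam to e
  have hpath1 : cnt (symPoly n q a ξ ν lam) = cnt (symPoly n q a ξ ν e) := by
    have h1 := path_cnt hθ hell
      (fun t => (ξ, ν, (((1 - t) * r + t : ℝ) : ℂ) * e))
      (by fun_prop) ?cond
    case cond =>
      intro t ht
      obtain ⟨ht0, ht1⟩ := ht
      have hc0 : (0:ℝ) ≤ (1 - t) * r + t := by
        have := mul_nonneg (by linarith : (0:ℝ) ≤ 1 - t) hr
        linarith
      refine ⟨hν, hξν, hOK _ hc0, ?_⟩
      intro h0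
      have h3 := (add_eq_zero_iff_of_nonneg (Real.sqrt_nonneg _)
        (norm_nonneg _)).mp h0
      have h4 : (1 - t) * r + t = 0 := by
        rw [habs_ce _ hc0] at h3
        exact h3.2
      have h5 : t = 0 := by
        have := mul_nonneg (by linarith : (0:ℝ) ≤ 1 - t) hr
        linarith
      have h6 : r = 0 := by
        rw [h5] at h4
        linarith
      apply hne
      rw [h3.1, hlameq, h6]
      simp
    calc cnt (symPoly n q a ξ ν lam)
        = cnt (symPoly n q a ξ ν ((((1 - (0:ℝ)) * r + 0 : ℝ)) * e)) := by
          refine hcg rfl rfl ?_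
          rw [hlameq]
          norm_num
      _ = cnt (symPoly n q a ξ ν ((((1 - (1:ℝ)) * r + 1 : ℝ)) * e)) := h1
      _ = cnt (symPoly n q a ξ ν e) := by
          refine hcg rfl rfl ?_
          norm_num
  -- Path 2 : deform ξ to 0
  have hsqrt1ne : ∀ u : Fin n → ℝ, Real.sqrt (∑ i, u i ^ 2) + ‖e‖ ≠ 0 := by
    intro u h0
    have := Real.sqrt_nonneg (∑ i, u i ^ 2)
    rw [habs_e] at h0
    linarith
  have hpath2 : cnt (symPoly n q a ξ ν e) = cnt (symPoly n q a (fun _ => 0) ν e) := by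
    have h1 := path_cnt hθ hell
      (fun t => ((fun i => (1 - t) * ξ i), ν, e))
      (by fun_prop) ?cond
    case cond =>
      intro t ht
      refine ⟨hν, ?_, heK, hsqrt1ne _⟩
      have : (∑ i, (1 - t) * ξ i * ν i) = (1 - t) * ∑ i, ξ i * ν i := by
        rw [Finset.mul_sum]
        exact Finset.sum_congr rfl fun i _ => by ring
      rw [this, hξν, mul_zero]
    calc cnt (symPoly n q a ξ ν e)
        = cnt (symPoly n q a (fun i => (1 - (0:ℝ)) * ξ i) ν e) := by
          refine hcg ?_ rfl rfl
          funext i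
          ring
      _ = cnt (symPoly n q a (fun i => (1 - (1:ℝ)) * ξ i) ν e) := h1
      _ = cnt (symPoly n q a (fun _ => 0) ν e) := by
          refine hcg ?_ rfl rfl
          funext i
          ring
  -- Path 3 : rotate ν to -ν
  obtain ⟨ν', hν'2, hνν'⟩ := exists_ortho n hn ν hν
  have hexp : ∀ c s' : ℝ, (∑ i, (c * ν i + s' * ν' i) ^ 2)
      = c ^ 2 * (∑ i, ν i ^ 2) + (2 * c * s') * (∑ i, ν i * ν' i)
        + s' ^ 2 * (∑ i, ν' i ^ 2) := by
    intro c s'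
    rw [Finset.mul_sum, Finset.mul_sum, Finset.mul_sum, ← Finset.sum_add_distrib,
      ← Finset.sum_add_distrib]
    exact Finset.sum_congr rfl fun i _ => by ring
  have hpath3 : cnt (symPoly n q a (fun _ => 0) ν e)
      = cnt (symPoly n q a (fun _ => 0) (fun i => -ν i) e) := by
    have h1 := path_cnt hθ hell
      (fun t => ((fun _ => (0:ℝ)),
        (fun i => Real.cos (Real.pi * t) * ν i + Real.sin (Real.pi * t) * ν' i), e))
      (by fun_prop) ?cond
    case cond =>
      intro t _
      refine ⟨?_, by simp, heK, hsqrt1ne _⟩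
      rw [hexp, hν, hν'2, hνν']
      have := Real.sin_sq_add_cos_sq (Real.pi * t)
      ring_nf
      ring_nf at this
      linarith
    calc cnt (symPoly n q a (fun _ => 0) ν e)
        = cnt (symPoly n q a (fun _ => 0)
            (fun i => Real.cos (Real.pi * 0) * ν i + Real.sin (Real.pi * 0) * ν' i) e) := by
          refine hcg rfl ?_ rfl
          funext i
          simp
      _ = cnt (symPoly n q a (fun _ => 0)
            (fun i => Real.cos (Real.pi * 1) * ν i + Real.sin (Real.pi * 1) * ν' i) e) := h1
      _ = cnt (symPoly n q a (fun _ => 0) (fun i => -ν i) e) := by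
          refine hcg rfl ?_ rfl
          funext i
          simp [Real.cos_pi, Real.sin_pi]
  -- flip identity
  have hflip : symPoly n q a (fun _ => 0) (fun i => -ν i) e
      = (symPoly n q a (fun _ => 0) ν e).comp (-X) := by
    apply Polynomial.funext
    intro τ
    rw [Polynomial.eval_comp]
    simp only [Polynomial.eval_neg, Polynomial.eval_X]
    rw [symPoly_eval, symPoly_eval]
    congr 1
    funext i
    push_cast
    ring
  have hswap : cnt (symPoly n q a (fun _ => 0) (fun i => -ν i) e)
      = ((cnt (symPoly n q a (fun _ => 0) ν e)).2,
         (cnt (symPoly n q a (fun _ => 0) ν e)).1) := by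
    rw [hflip]
    exact cnt_neg _
  set c := cnt (symPoly n q a (fun _ => 0) ν e) with hc
  have hceq : c = (c.2, c.1) := by rw [hc, ← hswap, ← hpath3]
  have hc12 : c.1 = c.2 := by
    have := congrArg Prod.fst hceq
    simpa using this
  have hcsum : c.1 + c.2 = 2 * q := by
    have hnr := symPoly_no_real_root hell (fun _ => 0) ν e hν (by simp) heK (hsqrt1ne _)
    have := cnt_add (symPoly n q a (fun _ => 0) ν e) (roots_im_ne hnr)
    rw [← hc] at this
    rw [this, (symPoly_deg hθ hell (fun _ => 0) ν e hν).1]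
  have hcntP : cnt P = c := by
    rw [hPsym, hpath1, hpath2, hc]
  have h1 : (cnt P).1 = q := by
    rw [hcntP]
    omega
  have h2 : (cnt P).2 = q := by
    rw [hcntP]
    omega
  exact ⟨h1, h2⟩
end
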